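/- arXiv:1311.7357 — 9 statements merged into one kernel-verified Lean document; each statement's English description precedes it below -/
import Mathlib

section
/- Fix γ with 1 < γ ≤ 15/14. Every online list-update algorithm with advice on a list of two items that serves every request sequence σ with cost at most γ·OPT(σ) (full cost model) must, for every length n divisible by 5, read at least (1 + (7γ−7)·log₂(7γ−7) + (8−7γ)·log₂(8−7γ))·n/5 bits of advice on some input of length n. -/
namespace ListUpdate

variable {α : Type} [DecidableEq α]

/-- Swap the adjacent items at (0-based) positions `i` and `i+1`. -/
def adjSwap (L : List α) (i : ℕ) : List α :=
  L.take i ++ (match L.drop i with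
    | a :: b :: t => b :: a :: t
    | t => t)

/-- An offline action for one request: a sequence of paid exchanges performed
before the access (each given by the position of the swapped pair), and the
target position for the free exchange performed after the access. -/
structure Action (α : Type) where
  paid : List ℕ
  target : ℕ

def doPaid (L : List α) (ps : List ℕ) : List α := ps.foldl adjSwap L

/-- Move item `r` (for free) to position `min j (current position)`,
i.e. to any position not farther from the front. -/
def freeMove (L : List α) (r : α) (j : ℕ) : List α :=
  (L.erase r).insertIdx (min j (L.idxOf r)) r

/-- Cost of one offline step: one unit per paid exchange plus the access cost;
`c = 1` gives the full cost model, `c = 0` the partial cost model. -/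
def stepCost (c : ℕ) (L : List α) (r : α) (a : Action α) : ℕ :=
  a.paid.length + ((doPaid L a.paid).idxOf r + c)

def stepList (L : List α) (r : α) (a : Action α) : List α :=
  freeMove (doPaid L a.paid) r a.target

/-- Total cost of serving the request sequence with the given actions. -/
def serveCost (c : ℕ) : List α → List α → List (Action α) → ℕ
  | _, [], _ => 0
  | _, _ :: _, [] => 0
  | L, r :: σ, a :: as => stepCost c L r a + serveCost c (stepList L r a) σ as

/-- The list configuration after serving the requests with the given actions. -/
def serveList : List α → List α → List (Action α) → List α
  | L, [], _ => L
  | L, _ :: _, [] => L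
  | L, r :: σ, a :: as => serveList (stepList L r a) σ as

/-- `optCost c L σ` : the optimal offline cost of serving `σ` starting from list `L`. -/
noncomputable def optCost (c : ℕ) (L : List α) (σ : List α) : ℕ :=
  sInf { n | ∃ as : List (Action α), as.length = σ.length ∧ serveCost c L σ as = n }

/-- Cost of an MTF2 (move-to-front-every-other-access) algorithm: it keeps one bit
per item; on each request the requested item's bit is flipped and the item is moved
to the front exactly when the bit becomes `false` (i.e. 0). -/
def mtf2Cost (c : ℕ) : (α → Bool) → List α → List α → ℕ
  | _, _, [] => 0
  | bits, L, r :: σ =>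
    (L.idxOf r + c) +
      mtf2Cost c (Function.update bits r (!bits r))
        (if !bits r then L else r :: L.erase r) σ

/-- Final list of an MTF2 algorithm. -/
def mtf2List : (α → Bool) → List α → List α → List α
  | _, L, [] => L
  | bits, L, r :: σ =>
      mtf2List (Function.update bits r (!bits r))
        (if !bits r then L else r :: L.erase r) σ

/-- MTFO moves the requested item to the front on every odd request to it:
this is MTF2 with all bits initially 1. -/
def mtfoCost (c : ℕ) (L σ : List α) : ℕ := mtf2Cost c (fun _ => true) L σ

/-- MTFE moves the requested item to the front on every even request to it:
this is MTF2 with all bits initially 0. -/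
def mtfeCost (c : ℕ) (L σ : List α) : ℕ := mtf2Cost c (fun _ => false) L σ

/-- One step of TS (Timestamp). `h` is the list of previous requests, most recent
first. The requested item `x` is inserted in front of the first item of the list
that precedes `x` and was requested at most once since the last request to `x`;
if there is no such item, or this is the first request to `x`, nothing moves. -/
def tsStep (h : List α) (L : List α) (x : α) : List α :=
  if x ∈ h then
    let cnt : α → ℕ := fun z => (h.takeWhile (fun w => decide (w ≠ x))).count z
    let pre := L.takeWhile (fun w => decide (w ≠ x))
    let keep := pre.takeWhile (fun z => decide (2 ≤ cnt z))
    keep ++ x :: (pre.drop keep.length ++ (L.dropWhile (fun w => decide (w ≠ x))).tail)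
  else L

/-- Cost of TS; `h` is the history of previous requests, most recent first
(initially `[]`). -/
def tsCost (c : ℕ) : List α → List α → List α → ℕ
  | _, _, [] => 0
  | h, L, r :: σ => (L.idxOf r + c) + tsCost c (r :: h) (tsStep h L r) σ

/-- An online algorithm with advice: its action may depend on the advice tape and
on the sequence of requests seen so far (ending with the current request). -/
def OnlineAdviceAlg (α : Type) := (ℕ → Bool) → List α → Action α

/-- Total cost of running the online algorithm `A` with advice tape `φ`:
`past` is the reversed-free list of requests served so far (oldest first). -/
def runAdvCost (c : ℕ) (A : OnlineAdviceAlg α) (φ : ℕ → Bool) :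
    List α → List α → List α → ℕ
  | _, _, [] => 0
  | past, L, r :: σ =>
      stepCost c L r (A φ (past ++ [r])) +
        runAdvCost c A φ (past ++ [r]) (stepList L r (A φ (past ++ [r]))) σ

/-- `A`, run on `σ` with tape `φ`, reads at most the first `k` bits of advice:
its behaviour on every step of `σ` is unchanged if the tape is modified
beyond position `k`. -/
def UsesAdvice (A : OnlineAdviceAlg α) (φ : ℕ → Bool) (σ : List α) (k : ℕ) : Prop :=
  ∀ ψ : ℕ → Bool, (∀ i < k, ψ i = φ i) →
    ∀ t, 0 < t → t ≤ σ.length → A ψ (σ.take t) = A φ (σ.take t)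

end ListUpdate

open ListUpdate

namespace LUAux
open ListUpdate
variable {α : Type} [DecidableEq α]

lemma adjSwap_pair_zero (a b : α) : adjSwap [a, b] 0 = [b, a] := rfl

lemma adjSwap_pair_succ (a b : α) (i : ℕ) : adjSwap [a, b] (i + 1) = [a, b] := by
  rcases i with _ | j
  · rfl
  · simp [adjSwap]

lemma doPaid_pair : ∀ (ps : List ℕ) (a b : α),
    doPaid [a, b] ps = [a, b] ∨ (doPaid [a, b] ps = [b, a] ∧ ps ≠ []) := by
  intro ps
  induction ps with
  | nil => intro a b; left; rfl
  | cons p ps ih =>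
    intro a b
    have h : doPaid [a, b] (p :: ps) = doPaid (adjSwap [a, b] p) ps := rfl
    rcases p with _ | j
    · rw [h, adjSwap_pair_zero]
      rcases ih b a with h1 | ⟨h1, _⟩
      · right; exact ⟨h1, by simp⟩
      · left; exact h1
    · rw [h, adjSwap_pair_succ]
      rcases ih a b with h1 | ⟨h1, _⟩
      · left; exact h1
      · right; exact ⟨h1, by simp⟩

lemma indexOf_pair_left (a b : α) : List.idxOf a [a, b] = 0 :=
  List.idxOf_cons_self

lemma indexOf_pair_right {a b : α} (hab : a ≠ b) : List.idxOf b [a, b] = 1 := by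
  rw [List.idxOf_cons_ne _ hab, List.idxOf_cons_self]

lemma erase_pair_left (a b : α) : [a, b].erase a = [b] := List.erase_cons_head a [b]

lemma erase_pair_right {a b : α} (hab : a ≠ b) : [a, b].erase b = [a] := by
  rw [List.erase_cons_tail (by simp [hab]), List.erase_cons_head]

lemma freeMove_front (u v : α) (t : ℕ) : freeMove [u, v] u t = [u, v] := by
  simp [freeMove, erase_pair_left, indexOf_pair_left]

lemma freeMove_back_zero {u v : α} (huv : u ≠ v) : freeMove [u, v] v 0 = [v, u] := by
  simp [freeMove, erase_pair_right huv, indexOf_pair_right huv]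

lemma freeMove_back_succ {u v : α} (huv : u ≠ v) (t : ℕ) :
    freeMove [u, v] v (t + 1) = [u, v] := by
  simp [freeMove, erase_pair_right huv, indexOf_pair_right huv, List.insertIdx]


lemma stepCost_pos (L : List α) (r : α) (a : Action α) : 1 ≤ stepCost 1 L r a := by
  simp [stepCost]; omega

lemma step_front {u v : α} (huv : u ≠ v) (a : Action α) :
    (stepList [u, v] u a = [u, v] ∧ 1 ≤ stepCost 1 [u, v] u a) ∨
    (stepList [u, v] u a = [v, u] ∧ 3 ≤ stepCost 1 [u, v] u a) := by
  rcases doPaid_pair a.paid u v with h | ⟨h, hne⟩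
  · left
    exact ⟨by simp [stepList, h, freeMove_front], stepCost_pos _ _ _⟩
  · have hlen : 1 ≤ a.paid.length := List.length_pos_iff.mpr hne
    have hcost : 3 ≤ stepCost 1 [u, v] u a := by
      simp [stepCost, h, indexOf_pair_right huv.symm] <;> omega
    rcases ht : a.target with _ | t
    · left
      refine ⟨?_, stepCost_pos _ _ _⟩
      simp [stepList, h, ht, freeMove_back_zero huv.symm]
    · right
      refine ⟨?_, hcost⟩
      simp [stepList, h, ht, freeMove_back_succ huv.symm]

lemma step_back {u v : α} (huv : u ≠ v) (a : Action α) :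
    (stepList [u, v] v a = [u, v] ∨ stepList [u, v] v a = [v, u]) ∧
      2 ≤ stepCost 1 [u, v] v a := by
  rcases doPaid_pair a.paid u v with h | ⟨h, hne⟩
  · constructor
    · rcases ht : a.target with _ | t
      · right; simp [stepList, h, ht, freeMove_back_zero huv]
      · left; simp [stepList, h, ht, freeMove_back_succ huv]
    · simp [stepCost, h, indexOf_pair_right huv] <;> omega
  · have hlen : 1 ≤ a.paid.length := List.length_pos_iff.mpr hne
    constructor
    · right; simp [stepList, h, freeMove_front]
    · simp [stepCost, h, indexOf_pair_left] <;> omega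

variable (x y : α)

def it : Bool → α := fun b => bif b then y else x

def conf : Bool → List α := fun c => bif c then [y, x] else [x, y]

def cOf : List α → Bool := fun L => decide (L = [y, x])

lemma cOf_conf (hxy : x ≠ y) (c : Bool) : cOf x y (conf x y c) = c := by
  cases c <;> simp [cOf, conf, hxy]

def Tc (c c' r : Bool) : ℕ := if r = c then (if c' = c then 1 else 3) else 2

lemma step_lb (hxy : x ≠ y) (c r : Bool) (a : Action α) :
    ∃ c', stepList (conf x y c) (it x y r) a = conf x y c' ∧
      Tc c c' r ≤ stepCost 1 (conf x y c) (it x y r) a := by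
  cases c <;> cases r
  · rcases step_front hxy a with ⟨h1, h2⟩ | ⟨h1, h2⟩
    · exact ⟨false, h1, by simpa [Tc, conf, it] using h2⟩
    · exact ⟨true, h1, by simpa [Tc, conf, it] using h2⟩
  · rcases step_back hxy a with ⟨h1 | h1, h2⟩
    · exact ⟨false, h1, by simpa [Tc, conf, it] using h2⟩
    · exact ⟨true, h1, by simpa [Tc, conf, it] using h2⟩
  · rcases step_back hxy.symm a with ⟨h1 | h1, h2⟩
    · exact ⟨true, h1, by simpa [Tc, conf, it] using h2⟩
    · exact ⟨false, h1, by simpa [Tc, conf, it] using h2⟩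
  · rcases step_front hxy.symm a with ⟨h1, h2⟩ | ⟨h1, h2⟩
    · exact ⟨true, h1, by simpa [Tc, conf, it] using h2⟩
    · exact ⟨false, h1, by simpa [Tc, conf, it] using h2⟩


variable (A : OnlineAdviceAlg α)

def finalL (ψ : ℕ → Bool) : List α → List α → List α → List α
  | _, L, [] => L
  | past, L, r :: σ => finalL ψ (past ++ [r]) (stepList L r (A ψ (past ++ [r]))) σ

def blk (bit : Bool) : List α := [x, y, it x y bit, it x y bit, it x y (!bit)]

def sigb (b : List Bool) : List α := (b.map (blk x y)).flatten

lemma sigb_nil : sigb x y [] = [] := rfl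

lemma sigb_cons (bit : Bool) (bs : List Bool) :
    sigb x y (bit :: bs) = blk x y bit ++ sigb x y bs := rfl

lemma sigb_append (u w : List Bool) : sigb x y (u ++ w) = sigb x y u ++ sigb x y w := by
  simp [sigb]

lemma sigb_length (b : List Bool) : (sigb x y b).length = 5 * b.length := by
  induction b with
  | nil => rfl
  | cons bit bs ih => rw [sigb_cons]; simp [blk] at ih ⊢; omega

lemma mem_sigb (b : List Bool) : ∀ r ∈ sigb x y b, r = x ∨ r = y := by
  induction b with
  | nil => simp [sigb_nil]
  | cons bit bs ih =>
    intro r hr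
    rw [sigb_cons, List.mem_append] at hr
    rcases hr with hr | hr
    · cases bit <;> simp [blk, it] at hr <;> tauto
    · exact ih r hr

def wrongs (ψ : ℕ → Bool) : List Bool → List α → List α → ℕ
  | [], _, _ => 0
  | bit :: bs, past, L =>
      (if cOf x y (finalL A ψ past L [x, y]) = bit then 0 else 1) +
        wrongs ψ bs (past ++ blk x y bit) (finalL A ψ past L (blk x y bit))

lemma tc_sum (c c1 c2 c3 c4 c5 bit : Bool) :
    7 + (if c2 = bit then 0 else 1) ≤
      Tc c c1 false + Tc c1 c2 true + Tc c2 c3 bit + Tc c3 c4 bit + Tc c4 c5 (!bit) := by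
  revert c c1 c2 c3 c4 c5 bit; decide

lemma block_lb (hxy : x ≠ y) (ψ : ℕ → Bool) (bit : Bool) (past rest : List α) (c : Bool) :
    ∃ c', finalL A ψ past (conf x y c) (blk x y bit) = conf x y c' ∧
      7 + (if cOf x y (finalL A ψ past (conf x y c) [x, y]) = bit then 0 else 1) +
        runAdvCost 1 A ψ (past ++ blk x y bit) (conf x y c') rest
      ≤ runAdvCost 1 A ψ past (conf x y c) (blk x y bit ++ rest) := by
  rw [show blk x y bit ++ rest = x :: y :: it x y bit :: it x y bit :: it x y (!bit) :: rest
      from rfl]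
  simp only [runAdvCost, finalL]
  obtain ⟨c1, e1, h1⟩ := step_lb x y hxy c false (A ψ (past ++ [x]))
  rw [show it x y false = x from rfl] at e1 h1
  simp only [e1]
  obtain ⟨c2, e2, h2⟩ := step_lb x y hxy c1 true (A ψ (past ++ [x] ++ [y]))
  rw [show it x y true = y from rfl] at e2 h2
  simp only [e2]
  obtain ⟨c3, e3, h3⟩ := step_lb x y hxy c2 bit (A ψ (past ++ [x] ++ [y] ++ [it x y bit]))
  simp only [e3]
  obtain ⟨c4, e4, h4⟩ :=
    step_lb x y hxy c3 bit (A ψ (past ++ [x] ++ [y] ++ [it x y bit] ++ [it x y bit]))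
  simp only [e4]
  obtain ⟨c5, e5, h5⟩ := step_lb x y hxy c4 (!bit)
    (A ψ (past ++ [x] ++ [y] ++ [it x y bit] ++ [it x y bit] ++ [it x y (!bit)]))
  simp only [e5]
  refine ⟨c5, by simp only [blk, finalL, e1, e2, e3, e4, e5], ?_⟩
  rw [cOf_conf x y hxy]
  have hpp : past ++ blk x y bit
      = past ++ [x] ++ [y] ++ [it x y bit] ++ [it x y bit] ++ [it x y (!bit)] := by
    simp [blk]
  rw [hpp]
  have hsum := tc_sum c c1 c2 c3 c4 c5 bit
  omega

lemma run_lb (hxy : x ≠ y) (ψ : ℕ → Bool) :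
    ∀ (b : List Bool) (past : List α) (c : Bool),
      7 * b.length + wrongs x y A ψ b past (conf x y c)
        ≤ runAdvCost 1 A ψ past (conf x y c) (sigb x y b) := by
  intro b
  induction b with
  | nil => intro past c; simp [sigb_nil, wrongs, runAdvCost]
  | cons bit bs ih =>
    intro past c
    rw [sigb_cons]
    obtain ⟨c', e', hb⟩ := block_lb x y A hxy ψ bit past (sigb x y bs) c
    have hw : wrongs x y A ψ (bit :: bs) past (conf x y c) =
        (if cOf x y (finalL A ψ past (conf x y c) [x, y]) = bit then 0 else 1) +
          wrongs x y A ψ bs (past ++ blk x y bit) (conf x y c') := by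
      rw [wrongs, e']
    have hih := ih (past ++ blk x y bit) c'
    rw [hw]
    simp only [List.length_cons]
    omega


lemma finalL_append (ψ : ℕ → Bool) : ∀ (p1 p2 : List α) (past L : List α),
    finalL A ψ past L (p1 ++ p2) = finalL A ψ (past ++ p1) (finalL A ψ past L p1) p2 := by
  intro p1
  induction p1 with
  | nil => intro p2 past L; simp [finalL]
  | cons r p ih =>
    intro p2 past L
    simp only [List.cons_append, finalL, List.append_eq]
    rw [ih]
    congr 1
    simp

lemma wrongs_eq_sum (ψ : ℕ → Bool) : ∀ (b : List Bool) (past L : List α),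
    wrongs x y A ψ b past L =
      ∑ i ∈ Finset.range b.length,
        (if cOf x y (finalL A ψ past L (sigb x y (b.take i) ++ [x, y])) = b.getD i false
          then 0 else 1) := by
  intro b
  induction b with
  | nil => intro past L; simp [wrongs]
  | cons bit bs ih =>
    intro past L
    rw [wrongs, List.length_cons, Finset.sum_range_succ']
    rw [Nat.add_comm]
    congr 1
    rw [ih (past ++ blk x y bit) (finalL A ψ past L (blk x y bit))]
    apply Finset.sum_congr rfl
    intro i _
    have hss : sigb x y ((bit :: bs).take (i + 1)) ++ [x, y]
        = blk x y bit ++ (sigb x y (bs.take i) ++ [x, y]) := by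
      rw [List.take_succ_cons, sigb_cons, List.append_assoc]
    rw [hss,
      finalL_append A ψ (blk x y bit) (sigb x y (List.take i bs) ++ [x, y]) past L,
      List.getD_cons_succ]

lemma finalL_congr (ψ ψ' : ℕ → Bool) : ∀ (p : List α) (past L : List α),
    (∀ t, past.length < t → t ≤ past.length + p.length →
      A ψ ((past ++ p).take t) = A ψ' ((past ++ p).take t)) →
    finalL A ψ past L p = finalL A ψ' past L p := by
  intro p
  induction p with
  | nil => intros; rfl
  | cons r p ih =>
    intro past L h
    have h1 : A ψ (past ++ [r]) = A ψ' (past ++ [r]) := by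
      have h2 := h (past.length + 1) (by omega) (by simp)
      rwa [show (past ++ r :: p).take (past.length + 1) = past ++ [r] from by
        rw [List.take_append]; simp] at h2
    simp only [finalL]
    rw [← h1]
    apply ih
    intro t ht1 ht2
    have he : (past ++ [r]) ++ p = past ++ r :: p := by simp
    rw [he]
    apply h t (by simp at ht1 ⊢; omega) (by simp at ht2 ⊢; omega)


lemma serve_append (c : ℕ) : ∀ (s1 : List α) (a1 : List (Action α)) (s2 : List α)
    (a2 : List (Action α)) (L : List α), a1.length = s1.length →
    serveCost c L (s1 ++ s2) (a1 ++ a2)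
      = serveCost c L s1 a1 + serveCost c (serveList L s1 a1) s2 a2 ∧
    serveList L (s1 ++ s2) (a1 ++ a2) = serveList (serveList L s1 a1) s2 a2 := by
  intro s1
  induction s1 with
  | nil =>
    intro a1 s2 a2 L h
    obtain rfl : a1 = [] := List.length_eq_zero_iff.mp h
    simp [serveCost, serveList]
  | cons r s ih =>
    intro a1 s2 a2 L h
    rcases a1 with _ | ⟨a, as⟩
    · simp at h
    · simp only [List.cons_append, serveCost, serveList, List.append_eq]
      have hih := ih as s2 a2 (stepList L r a) (by simpa using h)
      rw [hih.1, hih.2]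
      exact ⟨by omega, rfl⟩

def optActs (bit : Bool) : List (Action α) :=
  bif bit then [⟨[], 1⟩, ⟨[], 0⟩, ⟨[], 1⟩, ⟨[], 1⟩, ⟨[], 0⟩]
  else [⟨[], 1⟩, ⟨[], 1⟩, ⟨[], 1⟩, ⟨[], 1⟩, ⟨[], 1⟩]

lemma serve_block (hxy : x ≠ y) (bit : Bool) :
    serveCost 1 [x, y] (blk x y bit) (optActs bit) = 7 ∧
    serveList [x, y] (blk x y bit) (optActs bit) = [x, y] := by
  cases bit <;>
    simp [blk, it, optActs, serveCost, serveList, stepCost, stepList, doPaid, freeMove,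
      indexOf_pair_left, indexOf_pair_right hxy, indexOf_pair_right hxy.symm,
      erase_pair_left, erase_pair_right hxy, erase_pair_right hxy.symm]

lemma opt_serve (hxy : x ≠ y) : ∀ b : List Bool,
    ((b.map optActs).flatten : List (Action α)).length = (sigb x y b).length ∧
    serveCost 1 [x, y] (sigb x y b) (b.map optActs).flatten = 7 * b.length ∧
    serveList [x, y] (sigb x y b) (b.map optActs).flatten = [x, y] := by
  intro b
  induction b with
  | nil => simp [sigb_nil, serveCost, serveList]
  | cons bit bs ih =>
    have hlen5 : (optActs bit : List (Action α)).length = (blk x y bit).length := by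
      cases bit <;> simp [optActs, blk]
    have hmap : ((bit :: bs).map optActs).flatten
        = (optActs bit : List (Action α)) ++ (bs.map optActs).flatten := rfl
    rw [sigb_cons, hmap]
    have hs := serve_append 1 (blk x y bit) (optActs bit) (sigb x y bs)
      (bs.map optActs).flatten [x, y] hlen5
    have hb := serve_block x y hxy bit
    refine ⟨?_, ?_, ?_⟩
    · simp only [List.length_append, hlen5, ih.1]
    · rw [hs.1, hb.1, hb.2, ih.2.1]; simp only [List.length_cons]; omega
    · rw [hs.2, hb.2, ih.2.2]

lemma opt_ub (hxy : x ≠ y) (b : List Bool) :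
    optCost 1 [x, y] (sigb x y b) ≤ 7 * b.length := by
  apply Nat.sInf_le
  exact ⟨(b.map optActs).flatten, (opt_serve x y hxy b).1, (opt_serve x y hxy b).2.1⟩


lemma take_of_prefix {l1 l2 tail : List α} (h : l2 = l1 ++ tail) {t : ℕ}
    (ht : t ≤ l1.length) : l2.take t = l1.take t := by
  subst h
  rw [List.take_append, Nat.sub_eq_zero_of_le ht, List.take_zero,
    List.append_nil]

lemma sigb_take_prefix (b : List Bool) (j : ℕ) (hj : j < b.length) :
    ∃ tail, sigb x y b = (sigb x y (b.take j) ++ [x, y]) ++ tail := by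
  refine ⟨it x y (b[j]) :: it x y (b[j]) :: it x y (!(b[j])) :: sigb x y (b.drop (j + 1)), ?_⟩
  conv_lhs => rw [← List.take_append_drop j b]
  rw [sigb_append, List.drop_eq_getElem_cons hj, sigb_cons]
  simp [blk, List.append_assoc]

def guess (ψ : ℕ → Bool) (bits : List Bool) : Bool :=
  cOf x y (finalL A ψ [] [x, y] (sigb x y bits ++ [x, y]))

lemma guess_congr (b : List Bool) (j : ℕ) (hj : j < b.length) (ψ ψ' : ℕ → Bool)
    (h : ∀ t, 0 < t → t ≤ (sigb x y b).length →
      A ψ ((sigb x y b).take t) = A ψ' ((sigb x y b).take t)) :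
    guess x y A ψ (b.take j) = guess x y A ψ' (b.take j) := by
  unfold guess
  congr 1
  obtain ⟨tail, htail⟩ := sigb_take_prefix x y b j hj
  apply finalL_congr
  intro t ht1 ht2
  simp only [List.length_nil, List.nil_append] at ht1 ht2 ⊢
  have hlen : (sigb x y (b.take j) ++ [x, y]).length ≤ (sigb x y b).length := by
    rw [htail]; simp
  rw [← take_of_prefix htail (show t ≤ (sigb x y (b.take j) ++ [x, y]).length by omega)]
  exact h t (by omega) (by omega)

lemma uses_mono {φ : ℕ → Bool} {σ : List α} {k k' : ℕ} (h : UsesAdvice A φ σ k)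
    (hk : k ≤ k') : UsesAdvice A φ σ k' :=
  fun ψ hψ => h ψ (fun i hi => hψ i (lt_of_lt_of_le hi hk))

lemma getD_ofFn {m : ℕ} (v : Fin m → Bool) {i : ℕ} (hi : i < m) :
    (List.ofFn v).getD i false = v ⟨i, hi⟩ := by
  rw [List.getD_eq_getElem (l := List.ofFn v) false (by simpa using hi), List.getElem_ofFn]

lemma take_succ_ofFn {m : ℕ} (v : Fin m → Bool) {i : ℕ} (hi : i < m) :
    (List.ofFn v).take (i + 1) = (List.ofFn v).take i ++ [v ⟨i, hi⟩] := by
  rw [List.take_succ]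
  congr 1
  rw [List.getElem?_eq_getElem (by simpa using hi), List.getElem_ofFn]
  rfl

lemma bool_rec_aux : ∀ g a b : Bool, ((g ≠ a) ↔ (g ≠ b)) → a = b := by decide


lemma card_bound {m K d : ℕ} (f : (Fin m → Bool) → (Fin K → Bool) × Finset (Fin m))
    (hinj : Function.Injective f) (hcard : ∀ v, (f v).2.card ≤ d) :
    (2 : ℕ) ^ m ≤ 2 ^ K * ∑ i ∈ Finset.range (d + 1), m.choose i := by
  classical
  have h1 : Fintype.card (Fin m → Bool) ≤
      ((Finset.univ : Finset (Fin K → Bool)) ×ˢ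
        ((Finset.range (d + 1)).biUnion
          (fun i => Finset.powersetCard i (Finset.univ : Finset (Fin m))))).card := by
    rw [← Finset.card_univ]
    apply Finset.card_le_card_of_injOn f
    · intro v _
      rw [Finset.mem_coe, Finset.mem_product]
      refine ⟨Finset.mem_univ _, ?_⟩
      rw [Finset.mem_biUnion]
      exact ⟨(f v).2.card, Finset.mem_range.mpr (by have := hcard v; omega),
        Finset.mem_powersetCard.mpr ⟨Finset.subset_univ _, rfl⟩⟩
    · exact fun a _ b _ h => hinj h
  rw [Finset.card_product, Finset.card_biUnion] at h1
  · have e1 : Fintype.card (Fin m → Bool) = 2 ^ m := by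
      simp [Fintype.card_fun]
    have e2 : (Finset.univ : Finset (Fin K → Bool)).card = 2 ^ K := by
      simp [Finset.card_univ, Fintype.card_fun]
    rw [e1, e2] at h1
    refine h1.trans (le_of_eq ?_)
    congr 1
    apply Finset.sum_congr rfl
    intro i _
    rw [Finset.card_powersetCard, Finset.card_univ, Fintype.card_fin]
  · intro i _ j _ hij
    rw [Function.onFun, Finset.disjoint_left]
    intro s hs hs'
    rw [Finset.mem_powersetCard] at hs hs'
    exact hij (hs.2.symm.trans hs'.2)

lemma entropy_bound {m K d : ℕ} (hdm : d ≤ m)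
    (h : (2 : ℕ) ^ m ≤ 2 ^ K * ∑ i ∈ Finset.range (d + 1), m.choose i)
    {p q : ℝ} (hp : 0 < p) (hq : 0 < q) (hpq : p ≤ q) (hpq1 : p + q = 1)
    (hd : (d : ℝ) ≤ p * m) :
    (1 + p * Real.logb 2 p + q * Real.logb 2 q) * m ≤ K := by
  have hsum : (∑ i ∈ Finset.range (d + 1), (m.choose i : ℝ)) * (p ^ d * q ^ (m - d)) ≤ 1 := by
    rw [Finset.sum_mul]
    have h1 : ∑ i ∈ Finset.range (d + 1), (m.choose i : ℝ) * (p ^ d * q ^ (m - d))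
        ≤ ∑ i ∈ Finset.range (d + 1), (m.choose i : ℝ) * (p ^ i * q ^ (m - i)) := by
      apply Finset.sum_le_sum
      intro i hi
      rw [Finset.mem_range] at hi
      have hid : i ≤ d := by omega
      have e1 : p ^ d = p ^ i * p ^ (d - i) := by
        rw [← pow_add]; congr 1; omega
      have e2 : q ^ (m - i) = q ^ (d - i) * q ^ (m - d) := by
        rw [← pow_add]; congr 1; omega
      have key : p ^ d * q ^ (m - d) ≤ p ^ i * q ^ (m - i) := by
        rw [e1, e2]
        have h3 : p ^ (d - i) ≤ q ^ (d - i) := pow_le_pow_left₀ hp.le hpq _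
        have h4 : (0:ℝ) ≤ p ^ i := by positivity
        have h5 : (0:ℝ) ≤ q ^ (m - d) := by positivity
        calc p ^ i * p ^ (d - i) * q ^ (m - d)
            ≤ p ^ i * q ^ (d - i) * q ^ (m - d) := by
              apply mul_le_mul_of_nonneg_right _ h5
              exact mul_le_mul_of_nonneg_left h3 h4
          _ = p ^ i * (q ^ (d - i) * q ^ (m - d)) := by ring
      exact mul_le_mul_of_nonneg_left key (by positivity)
    refine h1.trans ?_
    have h2 : ∑ i ∈ Finset.range (d + 1), (m.choose i : ℝ) * (p ^ i * q ^ (m - i))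
        ≤ ∑ i ∈ Finset.range (m + 1), (m.choose i : ℝ) * (p ^ i * q ^ (m - i)) := by
      apply Finset.sum_le_sum_of_subset_of_nonneg
      · intro i hi
        rw [Finset.mem_range] at hi ⊢
        omega
      · intro i _ _
        positivity
    refine h2.trans ?_
    have h3 : ∑ i ∈ Finset.range (m + 1), (m.choose i : ℝ) * (p ^ i * q ^ (m - i))
        = (p + q) ^ m := by
      rw [add_pow]
      apply Finset.sum_congr rfl
      intro i _
      ring
    rw [h3, hpq1, one_pow]
  have hpow : (0:ℝ) < p ^ d * q ^ (m - d) := by positivity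
  have hS : (0:ℝ) < ∑ i ∈ Finset.range (d + 1), (m.choose i : ℝ) := by
    apply Finset.sum_pos
    · intro i hi
      rw [Finset.mem_range] at hi
      have : 0 < m.choose i := Nat.choose_pos (by omega)
      exact_mod_cast this
    · exact ⟨0, Finset.mem_range.mpr (by omega)⟩
  have hSle : (∑ i ∈ Finset.range (d + 1), (m.choose i : ℝ)) ≤ (p ^ d * q ^ (m - d))⁻¹ := by
    rw [← one_div]
    exact (le_div_iff₀ hpow).mpr hsum
  have h2R : (2:ℝ) ^ m ≤ 2 ^ K * (p ^ d * q ^ (m - d))⁻¹ := by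
    have hc : ((2 ^ m : ℕ) : ℝ) ≤ ((2 ^ K * ∑ i ∈ Finset.range (d + 1), m.choose i : ℕ) : ℝ) := by
      exact_mod_cast h
    push_cast at hc
    calc (2:ℝ) ^ m ≤ 2 ^ K * ∑ i ∈ Finset.range (d + 1), (m.choose i : ℝ) := hc
      _ ≤ 2 ^ K * (p ^ d * q ^ (m - d))⁻¹ :=
          mul_le_mul_of_nonneg_left hSle (by positivity)
  have hlog := Real.logb_le_logb_of_le one_lt_two (by positivity) h2R
  have hmd : ((m - d : ℕ) : ℝ) = (m : ℝ) - d := Nat.cast_sub hdm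
  have e3 : Real.logb 2 ((2:ℝ) ^ m) = m := by
    rw [Real.logb_pow, Real.logb_self_eq_one one_lt_two, mul_one]
  have e4 : Real.logb 2 ((2:ℝ) ^ K * (p ^ d * q ^ (m - d))⁻¹)
      = K - (d * Real.logb 2 p + ((m:ℝ) - d) * Real.logb 2 q) := by
    rw [Real.logb_mul (by positivity) (by positivity), Real.logb_inv,
      Real.logb_mul (by positivity) (by positivity), Real.logb_pow, Real.logb_pow,
      Real.logb_pow, Real.logb_self_eq_one one_lt_two, hmd]
    ring
  rw [e3, e4] at hlog
  have hlplq : Real.logb 2 p ≤ Real.logb 2 q := Real.logb_le_logb_of_le one_lt_two hp hpq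
  have hkey : 0 ≤ (p * m - d) * (Real.logb 2 q - Real.logb 2 p) :=
    mul_nonneg (by linarith) (by linarith)
  have hq' : q = 1 - p := by linarith
  subst hq'
  nlinarith [hkey, hlog]

end LUAux

/-- Any online list-update algorithm with advice on a two-item list that is strictly
`γ`-competitive (cost at most `γ·OPT(σ)` on every `σ`, full cost model), for
`1 < γ ≤ 15/14`, must read at least
`(1 + (7γ-7)·log₂(7γ-7) + (8-7γ)·log₂(8-7γ))·n/5` bits of advice on some input of
length `n`, for every `n` divisible by `5`. -/
theorem list_update_advice_lower_bound {α : Type} [DecidableEq α]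
    (x y : α) (hxy : x ≠ y)
    (γ : ℝ) (hγ1 : 1 < γ) (hγ2 : γ ≤ 15 / 14)
    (A : OnlineAdviceAlg α) (φ : List α → ℕ → Bool)
    (hcomp : ∀ σ : List α, (∀ r ∈ σ, r = x ∨ r = y) →
      (runAdvCost 1 A (φ σ) [] [x, y] σ : ℝ) ≤ γ * (optCost 1 [x, y] σ : ℝ))
    (n : ℕ) (hn : 5 ∣ n) :
    ∃ σ : List α, σ.length = n ∧ (∀ r ∈ σ, r = x ∨ r = y) ∧
      ∀ k : ℕ, UsesAdvice A (φ σ) σ k →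
        (1 + (7 * γ - 7) * Real.logb 2 (7 * γ - 7)
           + (8 - 7 * γ) * Real.logb 2 (8 - 7 * γ)) * n / 5 ≤ (k : ℝ) := by
  classical
  obtain ⟨m, rfl⟩ := hn
  by_cases hE : (1 + (7 * γ - 7) * Real.logb 2 (7 * γ - 7)
      + (8 - 7 * γ) * Real.logb 2 (8 - 7 * γ)) ≤ 0
  · refine ⟨LUAux.sigb x y (List.replicate m false), ?_, LUAux.mem_sigb x y _, ?_⟩
    · rw [LUAux.sigb_length]; simp
    · intro k _
      have h1 : (0:ℝ) ≤ (k : ℕ) := Nat.cast_nonneg k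
      have h2 : (0:ℝ) ≤ ((5 * m : ℕ) : ℝ) := Nat.cast_nonneg _
      nlinarith
  · push_neg at hE
    by_contra hcon
    push_neg at hcon
    set p : ℝ := 7 * γ - 7 with hpdef
    set q : ℝ := 8 - 7 * γ with hqdef
    set E : ℝ := 1 + p * Real.logb 2 p + q * Real.logb 2 q with hEdef
    have hp : 0 < p := by rw [hpdef]; linarith
    have hq : 0 < q := by rw [hqdef]; linarith
    have hpq : p ≤ q := by rw [hpdef, hqdef]; linarith
    have hpq1 : p + q = 1 := by rw [hpdef, hqdef]; ring
    have hEn : E * ((5 * m : ℕ) : ℝ) / 5 = E * m := by push_cast; ring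
    have hks : ∀ v : Fin m → Bool, ∃ k,
        UsesAdvice A (φ (LUAux.sigb x y (List.ofFn v))) (LUAux.sigb x y (List.ofFn v)) k ∧
          (k : ℝ) < E * m := by
      intro v
      obtain ⟨k, hk1, hk2⟩ := hcon (LUAux.sigb x y (List.ofFn v))
        (by rw [LUAux.sigb_length]; simp) (LUAux.mem_sigb x y _)
      exact ⟨k, hk1, by rw [← hEn]; exact hk2⟩
    rcases Nat.eq_zero_or_pos m with hm0 | hm0
    · subst hm0
      obtain ⟨k, _, hk2⟩ := hks (fun _ => false)
      norm_num at hk2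
      exact absurd hk2 (not_lt.mpr (Nat.cast_nonneg k))
    choose kf hkU hklt using hks
    set K : ℕ := ⌈E * (m : ℝ)⌉₊ - 1 with hKdef
    have hEm_pos : 0 < E * (m : ℝ) := mul_pos hE (by exact_mod_cast hm0)
    have hceil : 1 ≤ ⌈E * (m : ℝ)⌉₊ := Nat.ceil_pos.mpr hEm_pos
    have hkK : ∀ v, kf v ≤ K := by
      intro v
      have h1 : (kf v : ℝ) < ⌈E * (m : ℝ)⌉₊ := lt_of_lt_of_le (hklt v) (Nat.le_ceil _)
      have h2 : kf v < ⌈E * (m : ℝ)⌉₊ := by exact_mod_cast h1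
      omega
    have hUK : ∀ v, UsesAdvice A (φ (LUAux.sigb x y (List.ofFn v)))
        (LUAux.sigb x y (List.ofFn v)) K := fun v => LUAux.uses_mono A (hkU v) (hkK v)
    set d : ℕ := ⌊p * (m : ℝ)⌋₊ with hddef
    have hpm_nonneg : 0 ≤ p * (m : ℝ) := by positivity
    have hd_le : (d : ℝ) ≤ p * m := Nat.floor_le hpm_nonneg
    have hp2 : p ≤ 1 / 2 := by rw [hpdef]; linarith
    have hdm : d ≤ m := by
      have hmr : (0:ℝ) ≤ (m : ℝ) := Nat.cast_nonneg m
      have : (d : ℝ) ≤ (m : ℝ) := le_trans hd_le (by nlinarith)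
      exact_mod_cast this
    have hW : ∀ v : Fin m → Bool,
        LUAux.wrongs x y A (φ (LUAux.sigb x y (List.ofFn v))) (List.ofFn v) [] [x, y] ≤ d := by
      intro v
      have hrun := LUAux.run_lb x y A hxy (φ (LUAux.sigb x y (List.ofFn v)))
        (List.ofFn v) [] false
      have hc0 : LUAux.conf x y false = [x, y] := rfl
      rw [hc0, List.length_ofFn] at hrun
      have hcmp := hcomp (LUAux.sigb x y (List.ofFn v)) (LUAux.mem_sigb x y _)
      have hopt := LUAux.opt_ub x y hxy (List.ofFn v)
      rw [List.length_ofFn] at hopt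
      have h1 : (7 * m + LUAux.wrongs x y A (φ (LUAux.sigb x y (List.ofFn v)))
            (List.ofFn v) [] [x, y] : ℝ)
          ≤ (runAdvCost 1 A (φ (LUAux.sigb x y (List.ofFn v))) [] [x, y]
              (LUAux.sigb x y (List.ofFn v)) : ℕ) := by exact_mod_cast hrun
      have h2 : ((optCost 1 [x, y] (LUAux.sigb x y (List.ofFn v)) : ℕ) : ℝ) ≤ 7 * m := by
        exact_mod_cast hopt
      have hγ0 : (0:ℝ) ≤ γ := by linarith
      have h3 : ((runAdvCost 1 A (φ (LUAux.sigb x y (List.ofFn v))) [] [x, y]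
          (LUAux.sigb x y (List.ofFn v)) : ℕ) : ℝ) ≤ γ * (7 * m) :=
        le_trans hcmp (by nlinarith)
      have h4 : (LUAux.wrongs x y A (φ (LUAux.sigb x y (List.ofFn v)))
          (List.ofFn v) [] [x, y] : ℝ) ≤ p * m := by
        rw [hpdef]; nlinarith
      exact Nat.le_floor h4
    have hguessK : ∀ (v : Fin m → Bool) (ψs : ℕ → Bool),
        (∀ i < K, ψs i = φ (LUAux.sigb x y (List.ofFn v)) i) →
        ∀ j, j < m → LUAux.guess x y A ψs ((List.ofFn v).take j)
          = LUAux.guess x y A (φ (LUAux.sigb x y (List.ofFn v))) ((List.ofFn v).take j) := by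
      intro v ψs hagree j hj
      apply LUAux.guess_congr x y A (List.ofFn v) j (by simpa using hj)
      intro t ht1 ht2
      exact hUK v ψs hagree t ht1 ht2
    set F : (Fin m → Bool) → ((Fin K → Bool) × Finset (Fin m)) := fun v =>
      (fun i => φ (LUAux.sigb x y (List.ofFn v)) i.val,
       Finset.univ.filter (fun j : Fin m =>
         LUAux.guess x y A (φ (LUAux.sigb x y (List.ofFn v))) ((List.ofFn v).take j.val)
           ≠ (List.ofFn v).getD j.val false)) with hFdef
    have hEcard : ∀ v, (F v).2.card ≤ d := by
      intro v
      have hwsum := LUAux.wrongs_eq_sum x y A (φ (LUAux.sigb x y (List.ofFn v)))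
        (List.ofFn v) [] [x, y]
      rw [List.length_ofFn] at hwsum
      have h1 : (F v).2.card = ∑ i ∈ Finset.range m,
          (if LUAux.guess x y A (φ (LUAux.sigb x y (List.ofFn v))) ((List.ofFn v).take i)
              ≠ (List.ofFn v).getD i false then 1 else 0) := by
        simp only [hFdef]
        rw [Finset.card_filter]
        exact Fin.sum_univ_eq_sum_range (fun i =>
          if LUAux.guess x y A (φ (LUAux.sigb x y (List.ofFn v))) ((List.ofFn v).take i)
              ≠ (List.ofFn v).getD i false then 1 else 0) m
      have h2 : LUAux.wrongs x y A (φ (LUAux.sigb x y (List.ofFn v)))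
            (List.ofFn v) [] [x, y] = ∑ i ∈ Finset.range m,
          (if LUAux.guess x y A (φ (LUAux.sigb x y (List.ofFn v))) ((List.ofFn v).take i)
              = (List.ofFn v).getD i false then 0 else 1) := hwsum
      have h3 : (F v).2.card = LUAux.wrongs x y A (φ (LUAux.sigb x y (List.ofFn v)))
          (List.ofFn v) [] [x, y] := by
        rw [h1, h2]
        apply Finset.sum_congr rfl
        intro i _
        by_cases hcase : LUAux.guess x y A (φ (LUAux.sigb x y (List.ofFn v)))
            ((List.ofFn v).take i) = (List.ofFn v).getD i false <;> simp [hcase]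
      rw [h3]
      exact hW v
    have hFinj : Function.Injective F := by
      intro v v' hvv
      have h1 : (F v).1 = (F v').1 := by rw [hvv]
      have h2 : (F v).2 = (F v').2 := by rw [hvv]
      set ψs : ℕ → Bool := fun i => if h : i < K then (F v).1 ⟨i, h⟩ else false with hψdef
      have hag : ∀ i < K, ψs i = φ (LUAux.sigb x y (List.ofFn v)) i := by
        intro i hi
        simp [hψdef, hi, hFdef]
      have hag' : ∀ i < K, ψs i = φ (LUAux.sigb x y (List.ofFn v')) i := by
        intro i hi
        have h1' := congrFun h1 ⟨i, hi⟩
        simp only [hFdef] at h1'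
        rw [hag i hi]
        exact h1'
      have main : ∀ j, j ≤ m → (List.ofFn v).take j = (List.ofFn v').take j := by
        intro j
        induction j with
        | zero => intro _; simp
        | succ i ihj =>
          intro hj
          have hi : i < m := by omega
          have hti := ihj (by omega)
          rw [LUAux.take_succ_ofFn v hi, LUAux.take_succ_ofFn v' hi, hti]
          suffices hvi : v ⟨i, hi⟩ = v' ⟨i, hi⟩ by rw [hvi]
          have hg : LUAux.guess x y A (φ (LUAux.sigb x y (List.ofFn v)))
                ((List.ofFn v).take i)
              = LUAux.guess x y A (φ (LUAux.sigb x y (List.ofFn v')))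
                ((List.ofFn v').take i) := by
            rw [← hguessK v ψs hag i hi, hti, hguessK v' ψs hag' i hi]
          have hmem : ((⟨i, hi⟩ : Fin m) ∈ (F v).2) ↔ ((⟨i, hi⟩ : Fin m) ∈ (F v').2) := by
            rw [h2]
          simp only [hFdef, Finset.mem_filter, Finset.mem_univ, true_and] at hmem
          rw [LUAux.getD_ofFn v hi, LUAux.getD_ofFn v' hi] at hmem
          rw [hg] at hmem
          exact LUAux.bool_rec_aux _ _ _ hmem
      have hfull := main m le_rfl
      rw [List.take_of_length_le (by simp), List.take_of_length_le (by simp)] at hfull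
      exact List.ofFn_injective hfull
    have hcard := LUAux.card_bound F hFinj hEcard
    have hfinal := LUAux.entropy_bound hdm hcard hp hq hpq hpq1 hd_le
    rw [← hEdef] at hfinal
    have hKlt : (K : ℝ) < E * m := by
      have h1 : (⌈E * (m : ℝ)⌉₊ : ℝ) < E * m + 1 := Nat.ceil_lt_add_one (le_of_lt hEm_pos)
      have h2 : (K : ℝ) = (⌈E * (m : ℝ)⌉₊ : ℝ) - 1 := by
        rw [hKdef, Nat.cast_sub hceil, Nat.cast_one]
      linarith
    linarith
end

section
/- Let σ be the request sequence defined by a bitstring B of length m on a two-item list initially ordered [x,y] (full cost model). For every way S of serving σ there exists a way S′ of serving σ whose total cost is at most the total cost of S and such that after serving each of the m rounds the list is ordered [x,y]. -/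
open ListUpdate

/-- The round of requests determined by one bit of the defining bitstring. -/
def roundSeq {α : Type} (x y : α) (b : Bool) : List α :=
  if b then [y, x, x, x, x] else [y, y, y, x, x]

/-- The request sequence defined by the bitstring `B` on the two-item list `[x, y]`. -/
def seqOf {α : Type} (x y : α) (B : List Bool) : List α :=
  (B.map (roundSeq x y)).flatten

namespace XYProof

open ListUpdate

/-- step weight: request `rb`, start state `s`, end state `t`. -/
def w (rb s t : Bool) : ℕ := if rb = s then (if t = s then 1 else 3) else 2

def pot (s : Bool) : ℕ := if s then 1 else 0

/-- DP lower bound for serving the bool-encoded requests from state `s`, ending in `t`. -/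
def W (s : Bool) : List Bool → Bool → ℕ
  | [], t => if t = s then 0 else 100
  | rb :: rest, t => min (w rb s false + W false rest t) (w rb s true + W true rest t)

def roundBits (b : Bool) : List Bool :=
  if b then [true, false, false, false, false] else [true, true, true, false, false]

def C (b : Bool) : ℕ := if b then 6 else 7

def Csum (B : List Bool) : ℕ := (B.map C).sum

lemma round_ineq : ∀ b s t : Bool, C b + pot t ≤ W s (roundBits b) t + pot s := by decide

section TwoItems

variable {α : Type} [DecidableEq α] (x y : α)

def cfg : Bool → List α := fun s => if s then [y, x] else [x, y]

def req : Bool → α := fun rb => if rb then y else x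

lemma adjSwap_pair (a b : α) (i : ℕ) : adjSwap [a, b] i = [a, b] ∨ adjSwap [a, b] i = [b, a] := by
  match i with
  | 0 => right; rfl
  | 1 => left; rfl
  | (n+2) => left; simp [adjSwap, List.take_of_length_le, List.drop_eq_nil_of_le]

lemma doPaid_pair (a b : α) (ps : List ℕ) :
    doPaid [a, b] ps = [a, b] ∨ (doPaid [a, b] ps = [b, a] ∧ ps ≠ []) := by
  induction ps generalizing a b with
  | nil => left; rfl
  | cons p ps ih =>
    have h : doPaid [a,b] (p :: ps) = doPaid (adjSwap [a,b] p) ps := rfl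
    rcases adjSwap_pair a b p with h1 | h1 <;> rw [h, h1]
    · rcases ih a b with h2 | ⟨h2, _⟩
      · left; exact h2
      · right; exact ⟨h2, by simp⟩
    · rcases ih b a with h2 | ⟨h2, _⟩
      · right; exact ⟨h2, by simp⟩
      · left; exact h2

lemma indexOf_snd (a b : α) (hab : a ≠ b) : List.idxOf b [a, b] = 1 := by
  simp [List.idxOf_cons, hab]

lemma erase_snd (a b : α) (hab : a ≠ b) : [a, b].erase b = [a] := by
  simp [List.erase_cons, hab]

lemma freeMove_front (a b : α) (j : ℕ) : freeMove [a, b] a j = [a, b] := by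
  simp [freeMove]

lemma freeMove_back (a b : α) (hab : a ≠ b) (j : ℕ) :
    freeMove [a, b] b j = [b, a] ∨ freeMove [a, b] b j = [a, b] := by
  rw [freeMove, indexOf_snd a b hab, erase_snd a b hab]
  match j with
  | 0 => left; rfl
  | (n+1) =>
    right
    have h1 : min (n+1) 1 = 1 := min_eq_right (by omega)
    rw [h1]
    simp [List.insertIdx]

/-- step lemma, request at front -/
lemma stepA (a b : α) (hab : a ≠ b) (act : Action α) :
    ∃ t : Bool, stepList [a, b] a act = (if t then [b, a] else [a, b]) ∧
      (if t then 3 else 1) ≤ stepCost 1 [a, b] a act := by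
  rcases doPaid_pair a b act.paid with h | ⟨h, hne⟩
  · refine ⟨false, ?_, ?_⟩
    · simp [stepList, h, freeMove_front]
    · simp [stepCost, h]
  · have hlen : 1 ≤ act.paid.length := List.length_pos_iff.mpr hne
    have hc : 3 ≤ stepCost 1 [a, b] a act := by
      rw [stepCost, h, indexOf_snd b a hab.symm]; omega
    rcases freeMove_back b a hab.symm act.target with h2 | h2
    · exact ⟨false, by rw [stepList, h]; exact h2, by simpa using Nat.le_trans (by norm_num) hc⟩
    · exact ⟨true, by rw [stepList, h]; exact h2, by simpa using hc⟩

/-- step lemma, request at back -/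
lemma stepB (a b : α) (hab : a ≠ b) (act : Action α) :
    ∃ t : Bool, stepList [a, b] b act = (if t then [b, a] else [a, b]) ∧
      2 ≤ stepCost 1 [a, b] b act := by
  rcases doPaid_pair a b act.paid with h | ⟨h, hne⟩
  · have hc : 2 ≤ stepCost 1 [a, b] b act := by
      rw [stepCost, h, indexOf_snd a b hab]; omega
    rcases freeMove_back a b hab act.target with h2 | h2
    · exact ⟨true, by rw [stepList, h]; exact h2, hc⟩
    · exact ⟨false, by rw [stepList, h]; exact h2, hc⟩
  · have hlen : 1 ≤ act.paid.length := List.length_pos_iff.mpr hne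
    refine ⟨true, ?_, ?_⟩
    · simp [stepList, h, freeMove_front]
    · rw [stepCost, h]; simp; omega

lemma bool_step (hxy : x ≠ y) (s rb : Bool) (act : Action α) :
    ∃ t : Bool, stepList (cfg x y s) (req x y rb) act = cfg x y t ∧
      w rb s t ≤ stepCost 1 (cfg x y s) (req x y rb) act := by
  cases s <;> cases rb
  · -- s = false, rb = false : list [x,y], request x at front
    obtain ⟨t, h1, h2⟩ := stepA x y hxy act
    exact ⟨t, by cases t <;> simpa [cfg, req] using h1,
      by cases t <;> simpa [cfg, req, w] using h2⟩
  · -- s = false, rb = true : request y at back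
    obtain ⟨t, h1, h2⟩ := stepB x y hxy act
    exact ⟨t, by cases t <;> simpa [cfg, req] using h1,
      by cases t <;> simpa [cfg, req, w] using h2⟩
  · -- s = true, rb = false : list [y,x], request x at back
    obtain ⟨t, h1, h2⟩ := stepB y x hxy.symm act
    exact ⟨!t, by cases t <;> simpa [cfg, req] using h1,
      by cases t <;> simpa [cfg, req, w] using h2⟩
  · -- s = true, rb = true : request y at front
    obtain ⟨t, h1, h2⟩ := stepA y x hxy.symm act
    exact ⟨!t, by cases t <;> simpa [cfg, req] using h1,
      by cases t <;> simpa [cfg, req, w] using h2⟩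

lemma seq_lb (hxy : x ≠ y) : ∀ (rbs : List Bool) (s : Bool) (as : List (Action α)),
    as.length = rbs.length →
    ∃ t : Bool, serveList (cfg x y s) (rbs.map (req x y)) as = cfg x y t ∧
      W s rbs t ≤ serveCost 1 (cfg x y s) (rbs.map (req x y)) as := by
  intro rbs
  induction rbs with
  | nil =>
    intro s as h
    obtain rfl : as = [] := List.length_eq_zero_iff.mp (by simpa using h)
    exact ⟨s, rfl, by simp [W, serveCost]⟩
  | cons rb rest ih =>
    intro s as h
    match as with
    | a :: as =>
      simp only [List.map_cons, serveList, serveCost]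
      obtain ⟨u, h1, h2⟩ := bool_step x y hxy s rb a
      obtain ⟨t, h3, h4⟩ := ih u as (by simpa using h)
      rw [h1]
      refine ⟨t, h3, ?_⟩
      have : W s (rb :: rest) t ≤ w rb s u + W u rest t := by
        cases u
        · exact min_le_left _ _
        · exact min_le_right _ _
      omega

lemma serveCost_append (c : ℕ) : ∀ (σ1 : List α) (as1 : List (Action α)),
    as1.length = σ1.length → ∀ (L : List α) (σ2 : List α) (as2 : List (Action α)),
    serveCost c L (σ1 ++ σ2) (as1 ++ as2) =
      serveCost c L σ1 as1 + serveCost c (serveList L σ1 as1) σ2 as2 := by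
  intro σ1
  induction σ1 with
  | nil => intro as1 h L σ2 as2; obtain rfl : as1 = [] := List.length_eq_zero_iff.mp (by simpa using h); simp [serveCost, serveList]
  | cons r σ1 ih =>
    intro as1 h L σ2 as2
    match as1 with
    | a :: as1 =>
      simp only [List.cons_append, serveCost, serveList, List.append_eq]
      rw [ih as1 (by simpa using h)]
      omega

lemma serveList_append : ∀ (σ1 : List α) (as1 : List (Action α)),
    as1.length = σ1.length → ∀ (L : List α) (σ2 : List α) (as2 : List (Action α)),
    serveList L (σ1 ++ σ2) (as1 ++ as2) = serveList (serveList L σ1 as1) σ2 as2 := by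
  intro σ1
  induction σ1 with
  | nil => intro as1 h L σ2 as2; obtain rfl : as1 = [] := List.length_eq_zero_iff.mp (by simpa using h); simp [serveList]
  | cons r σ1 ih =>
    intro as1 h L σ2 as2
    match as1 with
    | a :: as1 =>
      simp only [List.cons_append, serveList]
      exact ih as1 (by simpa using h) _ _ _

lemma roundSeq_eq (b : Bool) : roundSeq x y b = (roundBits b).map (req x y) := by
  cases b <;> rfl

lemma total_lb (hxy : x ≠ y) : ∀ (B : List Bool) (s : Bool) (as : List (Action α)),
    as.length = (seqOf x y B).length →
    ∃ t : Bool, Csum B + pot t ≤ serveCost 1 (cfg x y s) (seqOf x y B) as + pot s := by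
  intro B
  induction B with
  | nil => intro s as _; exact ⟨s, by simp [Csum, serveCost, seqOf]⟩
  | cons b B ih =>
    intro s as h
    have hseq : seqOf x y (b :: B) = roundSeq x y b ++ seqOf x y B := rfl
    have hr5 : (roundSeq x y b).length = 5 := by cases b <;> rfl
    have hlen : (as.take 5).length = 5 := by
      rw [List.length_take]
      rw [hseq] at h
      simp [hr5] at h
      omega
    have hsplit : as = as.take 5 ++ as.drop 5 := (List.take_append_drop 5 as).symm
    rw [hseq, hsplit,
      serveCost_append 1 (roundSeq x y b) (as.take 5) (by rw [hlen, hr5]) (cfg x y s)]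
    obtain ⟨u, hu1, hu2⟩ := seq_lb x y hxy (roundBits b) s (as.take 5)
      (by rw [hlen]; cases b <;> rfl)
    rw [← roundSeq_eq] at hu1 hu2
    rw [hu1]
    obtain ⟨t, ht⟩ := ih u (as.drop 5) (by
      rw [hseq] at h
      simp only [List.length_append, hr5] at h
      simp [h])
    refine ⟨t, ?_⟩
    have hri := round_ineq b s u
    have : Csum (b :: B) = C b + Csum B := by simp [Csum]
    omega

/-- our explicit strategy per round -/
def myRound (b : Bool) : List (Action α) :=
  if b then [⟨[], 1⟩, ⟨[], 0⟩, ⟨[], 0⟩, ⟨[], 0⟩, ⟨[], 0⟩]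
  else [⟨[], 0⟩, ⟨[], 0⟩, ⟨[], 0⟩, ⟨[], 0⟩, ⟨[], 0⟩]

def myAs (B : List Bool) : List (Action α) := (B.map myRound).flatten

lemma step_xy_y0 (hxy : x ≠ y) : stepList [x, y] y ⟨[], 0⟩ = [y, x] ∧ stepCost 1 [x, y] y ⟨[], 0⟩ = 2 := by
  constructor
  · show freeMove [x,y] y 0 = [y,x]
    rw [freeMove, indexOf_snd x y hxy, erase_snd x y hxy]; rfl
  · show 0 + (List.idxOf y [x,y] + 1) = 2
    rw [indexOf_snd x y hxy]

lemma step_xy_y1 (hxy : x ≠ y) : stepList [x, y] y ⟨[], 1⟩ = [x, y] ∧ stepCost 1 [x, y] y ⟨[], 1⟩ = 2 := by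
  constructor
  · show freeMove [x,y] y 1 = [x,y]
    rw [freeMove, indexOf_snd x y hxy, erase_snd x y hxy]; rfl
  · show 0 + (List.idxOf y [x,y] + 1) = 2
    rw [indexOf_snd x y hxy]

lemma step_xy_x0 : stepList [x, y] x ⟨[], 0⟩ = [x, y] ∧ stepCost 1 [x, y] x ⟨[], 0⟩ = 1 := by
  constructor
  · show freeMove [x,y] x 0 = [x,y]
    exact freeMove_front x y 0
  · show 0 + (List.idxOf x [x,y] + 1) = 1
    simp

lemma step_yx_y0 : stepList [y, x] y ⟨[], 0⟩ = [y, x] ∧ stepCost 1 [y, x] y ⟨[], 0⟩ = 1 := by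
  constructor
  · show freeMove [y,x] y 0 = [y,x]
    exact freeMove_front y x 0
  · show 0 + (List.idxOf y [y,x] + 1) = 1
    simp

lemma step_yx_x0 (hxy : x ≠ y) : stepList [y, x] x ⟨[], 0⟩ = [x, y] ∧ stepCost 1 [y, x] x ⟨[], 0⟩ = 2 := by
  constructor
  · show freeMove [y,x] x 0 = [x,y]
    rw [freeMove, indexOf_snd y x hxy.symm, erase_snd y x hxy.symm]; rfl
  · show 0 + (List.idxOf x [y,x] + 1) = 2
    rw [indexOf_snd y x hxy.symm]

lemma myRound_serve (hxy : x ≠ y) (b : Bool) :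
    serveCost 1 [x, y] (roundSeq x y b) (myRound b) = C b ∧
    serveList [x, y] (roundSeq x y b) (myRound b) = [x, y] := by
  have h1 := step_xy_y0 x y hxy
  have h2 := step_xy_y1 x y hxy
  have h3 := step_xy_x0 x y
  have h4 := step_yx_y0 x y
  have h5 := step_yx_x0 x y hxy
  cases b <;>
    simp only [roundSeq, myRound, if_true, if_false, Bool.false_eq_true, serveCost, serveList,
      h1.1, h1.2, h2.1, h2.2, h3.1, h3.2, h4.1, h4.2, h5.1, h5.2, C] <;> exact ⟨trivial, trivial⟩

lemma myAs_serve (hxy : x ≠ y) : ∀ B : List Bool,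
    serveCost 1 [x, y] (seqOf x y B) (myAs B) = Csum B ∧
    serveList [x, y] (seqOf x y B) (myAs B) = [x, y] ∧
    (myAs B : List (Action α)).length = (seqOf x y B).length := by
  intro B
  induction B with
  | nil => exact ⟨rfl, rfl, rfl⟩
  | cons b B ih =>
    have hseq : seqOf x y (b :: B) = roundSeq x y b ++ seqOf x y B := rfl
    have hAs : (myAs (b :: B) : List (Action α)) = myRound b ++ myAs B := rfl
    have hr5 : (roundSeq x y b).length = 5 := by cases b <;> rfl
    have hm5 : (myRound b : List (Action α)).length = 5 := by cases b <;> rfl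
    have hlen : (myRound b : List (Action α)).length = (roundSeq x y b).length := by
      rw [hr5, hm5]
    obtain ⟨hc, hl, hn⟩ := ih
    obtain ⟨hrc, hrl⟩ := myRound_serve x y hxy b
    refine ⟨?_, ?_, ?_⟩
    · rw [hseq, hAs, serveCost_append 1 _ _ hlen, hrl, hrc, hc]
      simp [Csum]
    · rw [hseq, hAs, serveList_append _ _ hlen, hrl, hl]
    · rw [hseq, hAs]
      simp [hr5, hm5, hn]

lemma take_flatten_const5 {β : Type} (f : Bool → List β) (hf : ∀ b, (f b).length = 5) :
    ∀ (B : List Bool) (i : ℕ), ((B.map f).flatten).take (5 * i) = ((B.take i).map f).flatten := by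
  intro B
  induction B with
  | nil => intro i; simp
  | cons b B ih =>
    intro i
    match i with
    | 0 => simp
    | (j+1) =>
      have : 5 * (j + 1) = (f b).length + 5 * j := by rw [hf]; ring
      simp only [List.map_cons, List.flatten_cons, List.take_cons, this, List.take_append, ih]
      rw [Nat.add_sub_cancel_left, ih, List.take_of_length_le (Nat.le_add_right _ _)]; rfl

end TwoItems

end XYProof


/-- For every way `as` of serving the sequence defined by a bitstring `B` on a two-item
list initially ordered `[x, y]` (full cost model), there is a way `as'` of serving it
with no larger total cost such that after each of the `m` rounds the list is
ordered `[x, y]`. -/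
theorem end_rounds_with_xy {α : Type} [DecidableEq α] (x y : α) (hxy : x ≠ y)
    (B : List Bool) (as : List (Action α)) (has : as.length = (seqOf x y B).length) :
    ∃ as' : List (Action α), as'.length = (seqOf x y B).length ∧
      serveCost 1 [x, y] (seqOf x y B) as' ≤ serveCost 1 [x, y] (seqOf x y B) as ∧
      ∀ i ≤ B.length,
        serveList [x, y] ((seqOf x y B).take (5 * i)) (as'.take (5 * i)) = [x, y] := by
  open XYProof in
  refine ⟨myAs B, (myAs_serve x y hxy B).2.2, ?_, ?_⟩
  · obtain ⟨t, ht⟩ := total_lb x y hxy B false as has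
    have h1 := (myAs_serve x y hxy B).1
    have hc : cfg x y false = [x, y] := rfl
    have hp : pot false = 0 := rfl
    rw [hc] at ht
    omega
  · intro i _
    have e1 : (seqOf x y B).take (5 * i) = seqOf x y (B.take i) :=
      take_flatten_const5 (roundSeq x y) (fun b => by cases b <;> rfl) B i
    have e2 : ((myAs B : List (Action α)).take (5 * i)) = myAs (B.take i) :=
      take_flatten_const5 myRound (fun b => by cases b <;> rfl) B i
    rw [e1, e2]
    exact (myAs_serve x y hxy (B.take i)).2.1
end

section
/- Let σ be the request sequence of length n defined by a bitstring on a two-item list initially ordered [x,y]. Then OPT(σ) ≤ 7n/5 under the full cost model. -/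
open ListUpdate

lemma seqOf_length {α : Type} (x y : α) (B : List Bool) :
    (seqOf x y B).length = 5 * B.length := by
  induction B with
  | nil => simp [seqOf]
  | cons b B ih =>
    cases b <;> simp [seqOf, roundSeq] at ih ⊢ <;> omega

lemma round_serve {α : Type} [DecidableEq α] (x y : α) (hxy : x ≠ y) (b : Bool)
    (σ : List α) (as : List (Action α)) :
    serveCost 1 [x,y] (roundSeq x y b ++ σ) (List.replicate 5 (⟨[],0⟩ : Action α) ++ as)
      = 7 + serveCost 1 [x,y] σ as := by
  have h1 : (x == y) = false := beq_eq_false_iff_ne.2 hxy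
  have h2 : (y == x) = false := beq_eq_false_iff_ne.2 (Ne.symm hxy)
  cases b <;>
    simp [roundSeq, serveCost, stepCost, stepList, doPaid, freeMove, List.erase_cons,
      hxy, Ne.symm hxy, List.idxOf, List.findIdx_cons, beq_iff_eq, h1, h2] <;> omega

lemma serve_seqOf {α : Type} [DecidableEq α] (x y : α) (hxy : x ≠ y) (B : List Bool) :
    serveCost 1 [x,y] (seqOf x y B) (List.replicate (5 * B.length) (⟨[],0⟩ : Action α))
      = 7 * B.length := by
  induction B with
  | nil => simp [seqOf, serveCost]
  | cons b B ih =>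
    have h5 : 5 * (b :: B).length = 5 + 5 * B.length := by simp; omega
    rw [h5, List.replicate_add]
    have hseq : seqOf x y (b :: B) = roundSeq x y b ++ seqOf x y B := by
      simp [seqOf]
    rw [hseq, round_serve x y hxy, ih]
    simp; omega

/-- For the request sequence `σ` of length `n` defined by a bitstring on a two-item
list initially ordered `[x, y]`, we have `OPT(σ) ≤ 7n/5` under the full cost model. -/
theorem opt_of_defining_bitstring {α : Type} [DecidableEq α] (x y : α) (hxy : x ≠ y)
    (B : List Bool) :
    5 * optCost 1 [x, y] (seqOf x y B) ≤ 7 * (seqOf x y B).length := by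
  have hopt : optCost 1 [x, y] (seqOf x y B) ≤ 7 * B.length := by
    apply Nat.sInf_le
    exact ⟨List.replicate (5 * B.length) ⟨[],0⟩,
      by simp [seqOf_length], serve_seqOf x y hxy B⟩
  rw [seqOf_length]
  omega
end

section
/- On a list of two items a, b initially ordered [a,b], under the partial cost model, the MTF2 algorithm started with any initial bit assignment serves the sequence consisting of 2i alternating pairs (b,a) (i.e., i repetitions of b,a,b,a) with total cost at most 3i; moreover, for any two complementary initial bit assignments, at least one of the two corresponding runs ends with the list ordered [a,b]. -/
open ListUpdate

/-- `i` repetitions of the four requests `b, a, b, a`. -/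
def altBA {α : Type} (a b : α) (i : ℕ) : List α :=
  (List.replicate i [b, a, b, a]).flatten


private lemma altBA_succ' {α : Type} (a b : α) (i : ℕ) :
    altBA a b (i+1) = b :: a :: b :: a :: altBA a b i := by
  simp [altBA, List.replicate_succ]

private lemma quad' {α : Type} [DecidableEq α] {a b : α} (hab : a ≠ b) (bits : α → Bool)
    (x y u v : Bool) (hA : bits a = x) (hB : bits b = y) :
    Function.update (Function.update (Function.update (Function.update bits b v) a u) b y) a x = bits := by
  funext z
  rcases eq_or_ne z a with rfl | hz
  · simp [Function.update_apply, hab, hA]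
  · rcases eq_or_ne z b with rfl | hz'
    · simp [Function.update_apply, hz, hB]
    · simp [Function.update_apply, hz, hz']

private lemma mtf2_key {α : Type} [DecidableEq α] {a b : α} (hab : a ≠ b) :
    ∀ i : ℕ, ∀ bits : α → Bool, ∀ L : List α, (L = [a,b] ∨ L = [b,a]) →
    mtf2Cost 0 bits L (altBA a b i) ≤ 3*i ∧
    mtf2List bits L (altBA a b i) =
      (if i = 0 then L else if bits a && !bits b then [b,a] else [a,b]) := by
  intro i
  induction i with
  | zero => intro bits L hL; simp [altBA, mtf2Cost, mtf2List]
  | succ n ih =>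
    intro bits L hL
    rw [altBA_succ']
    rcases hA : bits a with _ | _ <;> rcases hB : bits b with _ | _ <;>
      rcases hL with rfl | rfl <;>
      simp only [mtf2Cost, mtf2List, hA, hB, Function.update_self,
        Function.update_of_ne hab, Function.update_of_ne hab.symm, Bool.not_false,
        Bool.not_true, if_true, if_false, List.erase_cons_head,
        List.erase_cons_tail, List.idxOf_cons_self, Bool.false_and, Bool.true_and] <;>
      rw [quad' hab bits _ _ _ _ hA hB] <;>
      simp [List.idxOf_cons, List.erase_cons, hab, hab.symm, hA, hB] <;>
      (obtain ⟨c1, l1⟩ := ih bits [a,b] (Or.inl rfl);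
       obtain ⟨c2, l2⟩ := ih bits [b,a] (Or.inr rfl);
       try simp [hA, hB] at l1 l2;
       exact ⟨by linarith, by simp [l1, l2]⟩)

/-- On the two-item list `[a, b]`, under the partial cost model, MTF2 with any initial
bit assignment serves `i` repetitions of `b, a, b, a` with cost at most `3i`; moreover,
for any two complementary initial bit assignments, at least one of the two runs ends
with the list ordered `[a, b]`. -/
theorem mtf2_on_alternating {α : Type} [DecidableEq α] (a b : α) (hab : a ≠ b) (i : ℕ) :
    (∀ bits : α → Bool, mtf2Cost 0 bits [a, b] (altBA a b i) ≤ 3 * i) ∧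
    (∀ bits : α → Bool,
      mtf2List bits [a, b] (altBA a b i) = [a, b] ∨
      mtf2List (fun z => !(bits z)) [a, b] (altBA a b i) = [a, b]) := by
  constructor
  · intro bits; exact (mtf2_key hab i bits [a,b] (Or.inl rfl)).1
  · intro bits
    have h1 := (mtf2_key hab i bits [a,b] (Or.inl rfl)).2
    have h2 := (mtf2_key hab i (fun z => !(bits z)) [a,b] (Or.inl rfl)).2
    rcases hA : bits a with _ | _ <;> rcases hB : bits b with _ | _ <;>
      simp [hA, hB] at h1 h2 <;>
      first | exact Or.inl h1 | exact Or.inr h2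
end

section
/- On a list of two items a, b, under the partial cost model, for any initial list order and any initial bit assignment (p,q) for (a,b), the cost of the MTF2 algorithm started with bits (p,q) plus the cost of the MTF2 algorithm started with the complementary bits (¬p,¬q) for serving the three requests b,a,a is at most 4. -/
open ListUpdate

/-- On a list of two items `a, b`, under the partial cost model, for any initial order
and any initial bits `(p, q)` for `(a, b)`, the cost of MTF2 started with bits `(p, q)`
plus the cost of MTF2 started with the complementary bits `(¬p, ¬q)` for serving the
requests `b, a, a` is at most `4`. -/
theorem mtf2_on_baa {α : Type} [DecidableEq α] (a b : α) (hab : a ≠ b)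
    (L : List α) (hL : L = [a, b] ∨ L = [b, a]) (p q : Bool) :
    mtf2Cost 0 (fun z => if z = a then p else q) L [b, a, a] +
      mtf2Cost 0 (fun z => if z = a then !p else !q) L [b, a, a] ≤ 4 := by
  have hba : b ≠ a := hab.symm
  rcases hL with rfl | rfl <;> cases p <;> cases q <;>
    simp [mtf2Cost, Function.update, hab, hba, List.idxOf_cons, List.erase_cons]
end

section
/- On a list of two items initially ordered [x,y], under the partial cost model, the sequence σ_α consisting of one request to x followed by k repetitions of the block y,x,x,x,y,x,x,x satisfies MTFO(σ_α) = MTFE(σ_α) = 4k and OPT(σ_α) = 2k. -/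
open ListUpdate

/-- `σ_α`: one request to `x` followed by `k` repetitions of `y,x,x,x,y,x,x,x`. -/
def sigmaAlpha {α : Type} (x y : α) (k : ℕ) : List α :=
  x :: (List.replicate k [y, x, x, x, y, x, x, x]).flatten


section Aux
variable {α : Type} [DecidableEq α]

lemma mtf2_blockO (x y : α) (hxy : x ≠ y) (b : α → Bool) (hbx : b x = false)
    (hby : b y = true) (σ : List α) :
    mtf2Cost 0 b [x,y] (y::x::x::x::y::x::x::x::σ) = 4 + mtf2Cost 0 b [x,y] σ := by
  have hupd : (Function.update (Function.update (Function.update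
      (Function.update b y false) x true) y true) x false) = b := by
    funext z
    rcases eq_or_ne z x with rfl | hzx
    · simp [hbx]
    · rcases eq_or_ne z y with rfl | hzy
      · simp [Function.update_apply, hxy.symm, hby]
      · simp [Function.update_apply, hzx, hzy]
  simp [mtf2Cost, hbx, hby, hxy, hxy.symm, Function.update_apply,
    List.idxOf_cons_self, List.idxOf_cons_ne, List.erase_cons_head, List.erase_cons_tail,
    hupd]
  have h2 : Function.update b x false = b := by rw [← hbx]; exact Function.update_eq_self x b
  rw [h2]
  omega

lemma mtf2_blockE (x y : α) (hxy : x ≠ y) (b : α → Bool) (hbx : b x = true)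
    (hby : b y = false) (σ : List α) :
    mtf2Cost 0 b [x,y] (y::x::x::x::y::x::x::x::σ) = 4 + mtf2Cost 0 b [x,y] σ := by
  have hupd : (Function.update (Function.update (Function.update
      (Function.update b y true) x false) y false) x true) = b := by
    funext z
    rcases eq_or_ne z x with rfl | hzx
    · simp [hbx]
    · rcases eq_or_ne z y with rfl | hzy
      · simp [Function.update_apply, hxy.symm, hby]
      · simp [Function.update_apply, hzx, hzy]
  simp [mtf2Cost, hbx, hby, hxy, hxy.symm, Function.update_apply,
    List.idxOf_cons_self, List.idxOf_cons_ne, List.erase_cons_head, List.erase_cons_tail,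
    hupd]
  have h2 : Function.update b x true = b := by rw [← hbx]; exact Function.update_eq_self x b
  rw [h2]
  omega

lemma mtf2_blocksO (x y : α) (hxy : x ≠ y) (b : α → Bool) (hbx : b x = false)
    (hby : b y = true) (k : ℕ) :
    mtf2Cost 0 b [x,y] (List.replicate k [y,x,x,x,y,x,x,x]).flatten = 4 * k := by
  induction k with
  | zero => simp [mtf2Cost]
  | succ n ih =>
      rw [List.replicate_succ, List.flatten_cons]
      show mtf2Cost 0 b [x,y] (y::x::x::x::y::x::x::x::_) = _
      rw [mtf2_blockO x y hxy b hbx hby]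
      simp only [List.append_eq, List.nil_append] at *
      rw [ih]; ring

lemma mtf2_blocksE (x y : α) (hxy : x ≠ y) (b : α → Bool) (hbx : b x = true)
    (hby : b y = false) (k : ℕ) :
    mtf2Cost 0 b [x,y] (List.replicate k [y,x,x,x,y,x,x,x]).flatten = 4 * k := by
  induction k with
  | zero => simp [mtf2Cost]
  | succ n ih =>
      rw [List.replicate_succ, List.flatten_cons]
      show mtf2Cost 0 b [x,y] (y::x::x::x::y::x::x::x::_) = _
      rw [mtf2_blockE x y hxy b hbx hby]
      simp only [List.append_eq, List.nil_append] at *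
      rw [ih]; ring


/-- the two possible configurations of a two-element list -/
def Pr (x y : α) (L : List α) : Prop := L = [x,y] ∨ L = [y,x]

lemma adjSwap_pr {x y : α} {L : List α} (h : Pr x y L) (i : ℕ) : Pr x y (adjSwap L i) := by
  rcases h with rfl | rfl <;> rcases i with _ | _ | n <;>
    simp [adjSwap, Pr, List.take_succ_cons, List.drop_succ_cons] <;> tauto

lemma doPaid_pr {x y : α} (ps : List ℕ) {L : List α} (h : Pr x y L) :
    Pr x y (doPaid L ps) := by
  induction ps generalizing L with
  | nil => exact h
  | cons p ps ih => exact ih (adjSwap_pr h p)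

lemma freeMove_pr {x y : α} (hxy : x ≠ y) {L : List α} (h : Pr x y L) {r : α}
    (hr : r = x ∨ r = y) (j : ℕ) : Pr x y (freeMove L r j) := by
  rcases h with rfl | rfl <;> rcases hr with rfl | rfl <;> rcases j with _ | j <;>
    simp [freeMove, Pr, hxy, hxy.symm, List.idxOf_cons_self, List.idxOf_cons_ne] <;> tauto

lemma stepList_pr {x y : α} (hxy : x ≠ y) {L : List α} (h : Pr x y L) {r : α}
    (hr : r = x ∨ r = y) (a : Action α) : Pr x y (stepList L r a) :=
  freeMove_pr hxy (doPaid_pr a.paid h) hr a.target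

lemma idx_le_one {x y : α} (hxy : x ≠ y) {L : List α} (h : Pr x y L) {r : α}
    (hr : r = x ∨ r = y) : L.idxOf r ≤ 1 := by
  rcases h with rfl | rfl <;> rcases hr with rfl | rfl <;>
    simp [List.idxOf_cons_self, List.idxOf_cons_ne, hxy, hxy.symm]

lemma stepCost_ge {x y : α} (hxy : x ≠ y) {L : List α} (h : Pr x y L) {r : α}
    (hr : r = x ∨ r = y) (a : Action α) :
    L.idxOf r ≤ stepCost 0 L r a := by
  rcases a with ⟨ps, j⟩
  cases ps with
  | nil => simp [stepCost, doPaid]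
  | cons p ps =>
      have := idx_le_one hxy h hr
      simp only [stepCost, List.length_cons]
      omega

lemma pair_ge {x y : α} (hxy : x ≠ y) {L : List α} (h : Pr x y L) (a b : Action α) :
    1 ≤ stepCost 0 L y a + stepCost 0 (stepList L y a) x b := by
  rcases h with rfl | rfl
  · have h1 := stepCost_ge hxy (Or.inl rfl : Pr x y [x,y]) (Or.inr rfl) a
    simp [List.idxOf_cons_ne, List.idxOf_cons_self, hxy] at h1
    omega
  · rcases a with ⟨ps, j⟩
    cases ps with
    | nil =>
        have hsl : stepList [y,x] y ⟨[], j⟩ = [y,x] := by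
          simp [stepList, doPaid, freeMove, List.idxOf_cons_self]
        rw [hsl]
        have h2 := stepCost_ge hxy (Or.inr rfl : Pr x y [y,x]) (Or.inl rfl) b
        simp [List.idxOf_cons_ne, List.idxOf_cons_self, hxy.symm] at h2
        omega
    | cons p ps =>
        have : 1 ≤ stepCost 0 [y,x] y ⟨p :: ps, j⟩ := by
          simp only [stepCost, List.length_cons]; omega
        omega

lemma low_bound {x y : α} (hxy : x ≠ y) (k : ℕ) :
    ∀ (L : List α) (as : List (Action α)), Pr x y L → as.length = 8 * k →
    2 * k ≤ serveCost 0 L (List.replicate k [y,x,x,x,y,x,x,x]).flatten as := by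
  induction k with
  | zero => intro L as h hlen; simp
  | succ n ih =>
      intro L as h hlen
      match as, hlen with
      | a1::a2::a3::a4::a5::a6::a7::a8::as', hlen =>
        rw [List.replicate_succ, List.flatten_cons]
        simp only [List.append_eq, List.cons_append, List.nil_append, serveCost]
        set L1 := stepList L y a1 with hL1
        have hP1 : Pr x y L1 := stepList_pr hxy h (Or.inr rfl) a1
        set L2 := stepList L1 x a2 with hL2
        have hP2 : Pr x y L2 := stepList_pr hxy hP1 (Or.inl rfl) a2
        set L3 := stepList L2 x a3 with hL3
        have hP3 : Pr x y L3 := stepList_pr hxy hP2 (Or.inl rfl) a3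
        set L4 := stepList L3 x a4 with hL4
        have hP4 : Pr x y L4 := stepList_pr hxy hP3 (Or.inl rfl) a4
        set L5 := stepList L4 y a5 with hL5
        have hP5 : Pr x y L5 := stepList_pr hxy hP4 (Or.inr rfl) a5
        set L6 := stepList L5 x a6 with hL6
        have hP6 : Pr x y L6 := stepList_pr hxy hP5 (Or.inl rfl) a6
        set L7 := stepList L6 x a7 with hL7
        have hP7 : Pr x y L7 := stepList_pr hxy hP6 (Or.inl rfl) a7
        set L8 := stepList L7 x a8 with hL8
        have hP8 : Pr x y L8 := stepList_pr hxy hP7 (Or.inl rfl) a8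
        have hpair1 : 1 ≤ stepCost 0 L y a1 + stepCost 0 L1 x a2 := pair_ge hxy h a1 a2
        have hpair2 : 1 ≤ stepCost 0 L4 y a5 + stepCost 0 L5 x a6 := pair_ge hxy hP4 a5 a6
        have hrest : 2 * n ≤ serveCost 0 L8 (List.replicate n [y,x,x,x,y,x,x,x]).flatten as' := by
          apply ih _ _ hP8
          simp only [List.length_cons] at hlen
          omega
        omega

lemma up_blocks {x y : α} (hxy : x ≠ y) (k : ℕ) :
    serveCost 0 [x,y] (List.replicate k [y,x,x,x,y,x,x,x]).flatten
      (List.replicate (8 * k) (⟨[], 1⟩ : Action α)) = 2 * k := by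
  induction k with
  | zero => simp [serveCost]
  | succ n ih =>
      have hrep : List.replicate (8 * (n+1)) (⟨[], 1⟩ : Action α) =
          ⟨[],1⟩::⟨[],1⟩::⟨[],1⟩::⟨[],1⟩::⟨[],1⟩::⟨[],1⟩::⟨[],1⟩::⟨[],1⟩::
            List.replicate (8 * n) (⟨[], 1⟩ : Action α) := by
        rw [show 8 * (n + 1) = 8 + 8 * n by ring, List.replicate_add]
        rfl
      rw [List.replicate_succ, List.flatten_cons, hrep]
      simp only [List.append_eq, List.cons_append, List.nil_append, serveCost]
      have hx : stepList [x,y] x (⟨[], 1⟩ : Action α) = [x,y] := by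
        simp [stepList, doPaid, freeMove, List.idxOf_cons_self]
      have hy : stepList [x,y] y (⟨[], 1⟩ : Action α) = [x,y] := by
        simp [stepList, doPaid, freeMove, hxy, hxy.symm, List.idxOf_cons_self,
          List.idxOf_cons_ne, List.insertIdx]
      have cx : stepCost 0 [x,y] x (⟨[], 1⟩ : Action α) = 0 := by
        simp [stepCost, doPaid, List.idxOf_cons_self]
      have cy : stepCost 0 [x,y] y (⟨[], 1⟩ : Action α) = 1 := by
        simp [stepCost, doPaid, hxy, List.idxOf_cons_ne, List.idxOf_cons_self]
      rw [hy, hx, hx, hx, hy, hx, hx, hx, ih]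
      simp only [cx, cy]
      ring

end Aux

/-- On the two-item list `[x, y]`, under the partial cost model,
`MTFO(σ_α) = MTFE(σ_α) = 4k` and `OPT(σ_α) = 2k`. -/
theorem costs_on_sigma_alpha {α : Type} [DecidableEq α] (x y : α) (hxy : x ≠ y)
    (k : ℕ) :
    mtfoCost 0 [x, y] (sigmaAlpha x y k) = 4 * k ∧
    mtfeCost 0 [x, y] (sigmaAlpha x y k) = 4 * k ∧
    optCost 0 [x, y] (sigmaAlpha x y k) = 2 * k := by
  refine ⟨?_, ?_, ?_⟩
  · have hb := mtf2_blocksO x y hxy (Function.update (fun _ => true) x false)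
      (by simp) (by simp [Function.update_apply, hxy.symm]) k
    simp [mtfoCost, sigmaAlpha, mtf2Cost, List.idxOf_cons_self, hb]
  · have hb := mtf2_blocksE x y hxy (Function.update (fun _ => false) x true)
      (by simp) (by simp [Function.update_apply, hxy.symm]) k
    simp [mtfeCost, sigmaAlpha, mtf2Cost, List.idxOf_cons_self, hb]
  · have hlenσ : (sigmaAlpha x y k).length = 1 + 8 * k := by
      simp [sigmaAlpha, List.length_flatten]
      ring
    have hmem : (2 * k) ∈ {n | ∃ as : List (Action α),
        as.length = (sigmaAlpha x y k).length ∧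
        serveCost 0 [x,y] (sigmaAlpha x y k) as = n} := by
      refine ⟨(⟨[],1⟩ : Action α) :: List.replicate (8*k) ⟨[],1⟩, ?_, ?_⟩
      · simp only [hlenσ, List.length_cons, List.length_replicate]
        ring
      · have hx : stepList [x,y] x (⟨[], 1⟩ : Action α) = [x,y] := by
          simp [stepList, doPaid, freeMove, List.idxOf_cons_self]
        have cx : stepCost 0 [x,y] x (⟨[], 1⟩ : Action α) = 0 := by
          simp [stepCost, doPaid, List.idxOf_cons_self]
        show stepCost 0 [x,y] x ⟨[],1⟩ +
          serveCost 0 (stepList [x,y] x ⟨[],1⟩) _ _ = 2 * k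
        rw [cx, hx, up_blocks hxy k]
        ring
    refine le_antisymm (Nat.sInf_le hmem) (le_csInf ⟨_, hmem⟩ ?_)
    rintro n ⟨as, hlen, rfl⟩
    rw [hlenσ] at hlen
    match as, hlen with
    | [], hlen => exact absurd hlen (by simp; omega)
    | a0 :: as', hlen =>
      show 2 * k ≤ stepCost 0 [x,y] x a0 +
        serveCost 0 (stepList [x,y] x a0) (List.replicate k [y,x,x,x,y,x,x,x]).flatten as'
      have hP : Pr x y (stepList [x,y] x a0) :=
        stepList_pr hxy (Or.inl rfl) (Or.inl rfl) a0
      have := low_bound hxy k (stepList [x,y] x a0) as' hP (by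
        simp only [List.length_cons] at hlen; omega)
      omega
end

section
/- On a list of two items initially ordered [x,y], under the partial cost model, for every positive integer k the sequence σ consisting of one request to x, followed by k repetitions of the block y,x,x,x,y,x,x,x, followed by 2k repetitions of the block y,y,x,x, satisfies MTFO(σ) = MTFE(σ) = TS(σ) = 10k and OPT(σ) ≤ 6k; in particular each of the three algorithms incurs cost at least (5/3)·OPT(σ) on σ. -/
open ListUpdate

/-- `σ`: `σ_α` followed by `2k` repetitions of `y,y,x,x`. -/
def sigmaLB {α : Type} (x y : α) (k : ℕ) : List α :=
  sigmaAlpha x y k ++ (List.replicate (2 * k) [y, y, x, x]).flatten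


variable {α : Type} [DecidableEq α]

section MTF
variable (x y : α) (hxy : x ≠ y)
include hxy

lemma mtfoA :
    ∀ (k : ℕ) (σ : List α) (bits : α → Bool), bits x = false → bits y = true →
    ∃ bits' : α → Bool, bits' x = false ∧ bits' y = true ∧
      mtf2Cost 0 bits [x, y] ((List.replicate k [y, x, x, x, y, x, x, x]).flatten ++ σ)
        = 4 * k + mtf2Cost 0 bits' [x, y] σ := by
  intro k
  induction k with
  | zero => exact fun σ bits hx hy => ⟨bits, hx, hy, by simp⟩
  | succ k ih =>
    intro σ bits hx hy
    rw [List.replicate_succ, List.flatten_cons, List.append_assoc]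
    simp only [List.cons_append, List.nil_append]
    simp [mtf2Cost, Function.update_apply, hx, hy, hxy, hxy.symm, List.erase_cons,
      List.idxOf_cons]
    obtain ⟨bits', h1, h2, h3⟩ := ih σ
      (Function.update (Function.update (Function.update (Function.update bits y false) x true) y true) x false)
      (by simp [Function.update_apply, hxy]) (by simp [Function.update_apply, hxy, hxy.symm])
    exact ⟨bits', h1, h2, by rw [h3]; ring⟩

lemma mtfoB :
    ∀ (k : ℕ) (σ : List α) (bits : α → Bool), bits x = false → bits y = true →
    ∃ bits' : α → Bool, bits' x = false ∧ bits' y = true ∧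
      mtf2Cost 0 bits [x, y] ((List.replicate k [y, y, x, x]).flatten ++ σ)
        = 3 * k + mtf2Cost 0 bits' [x, y] σ := by
  intro k
  induction k with
  | zero => exact fun σ bits hx hy => ⟨bits, hx, hy, by simp⟩
  | succ k ih =>
    intro σ bits hx hy
    rw [List.replicate_succ, List.flatten_cons, List.append_assoc]
    simp only [List.cons_append, List.nil_append]
    simp [mtf2Cost, Function.update_apply, hx, hy, hxy, hxy.symm, List.erase_cons,
      List.idxOf_cons]
    obtain ⟨bits', h1, h2, h3⟩ := ih σ
      (Function.update (Function.update bits y true) x false)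
      (by simp [Function.update_apply, hxy]) (by simp [Function.update_apply, hxy, hxy.symm])
    exact ⟨bits', h1, h2, by rw [h3]; ring⟩

lemma mtfeA :
    ∀ (k : ℕ) (σ : List α) (bits : α → Bool), bits x = true → bits y = false →
    ∃ bits' : α → Bool, bits' x = true ∧ bits' y = false ∧
      mtf2Cost 0 bits [x, y] ((List.replicate k [y, x, x, x, y, x, x, x]).flatten ++ σ)
        = 4 * k + mtf2Cost 0 bits' [x, y] σ := by
  intro k
  induction k with
  | zero => exact fun σ bits hx hy => ⟨bits, hx, hy, by simp⟩
  | succ k ih =>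
    intro σ bits hx hy
    rw [List.replicate_succ, List.flatten_cons, List.append_assoc]
    simp only [List.cons_append, List.nil_append]
    simp [mtf2Cost, Function.update_apply, hx, hy, hxy, hxy.symm, List.erase_cons,
      List.idxOf_cons]
    obtain ⟨bits', h1, h2, h3⟩ := ih σ
      (Function.update (Function.update (Function.update (Function.update bits y true) x false) y false) x true)
      (by simp [Function.update_apply, hxy]) (by simp [Function.update_apply, hxy, hxy.symm])
    exact ⟨bits', h1, h2, by rw [h3]; ring⟩

lemma mtfeB :
    ∀ (k : ℕ) (σ : List α) (bits : α → Bool), bits x = true → bits y = false →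
    ∃ bits' : α → Bool, bits' x = true ∧ bits' y = false ∧
      mtf2Cost 0 bits [x, y] ((List.replicate k [y, y, x, x]).flatten ++ σ)
        = 3 * k + mtf2Cost 0 bits' [x, y] σ := by
  intro k
  induction k with
  | zero => exact fun σ bits hx hy => ⟨bits, hx, hy, by simp⟩
  | succ k ih =>
    intro σ bits hx hy
    rw [List.replicate_succ, List.flatten_cons, List.append_assoc]
    simp only [List.cons_append, List.nil_append]
    simp [mtf2Cost, Function.update_apply, hx, hy, hxy, hxy.symm, List.erase_cons,
      List.idxOf_cons]
    obtain ⟨bits', h1, h2, h3⟩ := ih σ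
      (Function.update (Function.update bits y false) x true)
      (by simp [Function.update_apply, hxy]) (by simp [Function.update_apply, hxy, hxy.symm])
    exact ⟨bits', h1, h2, by rw [h3]; ring⟩

lemma mtfo_total (k : ℕ) : mtfoCost 0 [x, y] (sigmaLB x y k) = 10 * k := by
  unfold mtfoCost sigmaLB sigmaAlpha
  rw [List.cons_append]
  rw [show mtf2Cost 0 (fun _ => true) [x, y]
      (x :: ((List.replicate k [y, x, x, x, y, x, x, x]).flatten ++
        (List.replicate (2 * k) [y, y, x, x]).flatten)) =
      0 + mtf2Cost 0 (Function.update (fun _ => true) x false) [x, y]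
        ((List.replicate k [y, x, x, x, y, x, x, x]).flatten ++
          (List.replicate (2 * k) [y, y, x, x]).flatten) from by
    simp [mtf2Cost]]
  obtain ⟨b1, hb1x, hb1y, h1⟩ := mtfoA x y hxy k ((List.replicate (2 * k) [y, y, x, x]).flatten)
    (Function.update (fun _ => true) x false)
    (by simp [Function.update_apply]) (by simp [Function.update_apply, hxy.symm])
  rw [zero_add, h1]
  obtain ⟨b2, _, _, h2⟩ := mtfoB x y hxy (2 * k) [] b1 hb1x hb1y
  rw [show (List.replicate (2*k) [y,y,x,x]).flatten =
    (List.replicate (2*k) [y,y,x,x]).flatten ++ [] from by simp, h2]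
  simp [mtf2Cost]; ring

lemma mtfe_total (k : ℕ) : mtfeCost 0 [x, y] (sigmaLB x y k) = 10 * k := by
  unfold mtfeCost sigmaLB sigmaAlpha
  rw [List.cons_append]
  rw [show mtf2Cost 0 (fun _ => false) [x, y]
      (x :: ((List.replicate k [y, x, x, x, y, x, x, x]).flatten ++
        (List.replicate (2 * k) [y, y, x, x]).flatten)) =
      0 + mtf2Cost 0 (Function.update (fun _ => false) x true) [x, y]
        ((List.replicate k [y, x, x, x, y, x, x, x]).flatten ++
          (List.replicate (2 * k) [y, y, x, x]).flatten) from by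
    simp [mtf2Cost]]
  obtain ⟨b1, hb1x, hb1y, h1⟩ := mtfeA x y hxy k ((List.replicate (2 * k) [y, y, x, x]).flatten)
    (Function.update (fun _ => false) x true)
    (by simp [Function.update_apply]) (by simp [Function.update_apply, hxy.symm])
  rw [zero_add, h1]
  obtain ⟨b2, _, _, h2⟩ := mtfeB x y hxy (2 * k) [] b1 hb1x hb1y
  rw [show (List.replicate (2*k) [y,y,x,x]).flatten =
    (List.replicate (2*k) [y,y,x,x]).flatten ++ [] from by simp, h2]
  simp [mtf2Cost]; ring

end MTF

section TS
variable (x y : α) (hxy : x ≠ y)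
include hxy

lemma tsA :
    ∀ (k : ℕ) (σ h : List α), (h = [x] ∨ ∃ t, h = x::x::x::y::t) →
    ∃ h', (h' = h ∧ k = 0 ∨ ∃ t, h' = x::x::x::y::t) ∧
      tsCost 0 h [x, y] ((List.replicate k [y, x, x, x, y, x, x, x]).flatten ++ σ)
        = 2 * k + tsCost 0 h' [x, y] σ := by
  intro k
  induction k with
  | zero => exact fun σ h hh => ⟨h, Or.inl ⟨rfl, rfl⟩, by simp⟩
  | succ k ih =>
    intro σ h hh
    rw [List.replicate_succ, List.flatten_cons, List.append_assoc]
    simp only [List.cons_append, List.nil_append]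
    rcases hh with rfl | ⟨t, rfl⟩ <;>
    · simp only [tsCost, tsStep, hxy, hxy.symm, List.takeWhile, List.dropWhile,
        List.count_cons]
      simp [tsCost, tsStep, hxy, hxy.symm, List.takeWhile, List.dropWhile, List.count_cons]
      obtain ⟨h', hh', hc⟩ := ih σ _ (Or.inr ⟨_, rfl⟩)
      rw [hc]
      rcases hh' with ⟨rfl, _⟩ | ⟨t', rfl⟩
      · exact ⟨_, by ring⟩
      · exact ⟨_, by ring⟩

lemma tsB :
    ∀ (k : ℕ) (σ h : List α), ((∃ t, h = x::x::x::y::t) ∨ ∃ t, h = x::x::y::y::t) →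
    ∃ h', ((∃ t, h' = x::x::x::y::t) ∨ ∃ t, h' = x::x::y::y::t) ∧
      tsCost 0 h [x, y] ((List.replicate k [y, y, x, x]).flatten ++ σ)
        = 4 * k + tsCost 0 h' [x, y] σ := by
  intro k
  induction k with
  | zero => exact fun σ h hh => ⟨h, hh, by simp⟩
  | succ k ih =>
    intro σ h hh
    rw [List.replicate_succ, List.flatten_cons, List.append_assoc]
    simp only [List.cons_append, List.nil_append]
    rcases hh with ⟨t, rfl⟩ | ⟨t, rfl⟩ <;>
    · simp [tsCost, tsStep, hxy, hxy.symm, List.takeWhile, List.dropWhile, List.count_cons]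
      obtain ⟨h', hh', hc⟩ := ih σ _ (Or.inr ⟨_, rfl⟩)
      exact ⟨h', hh', by rw [hc]; ring⟩

lemma ts_total (k : ℕ) (hk : 0 < k) : tsCost 0 [] [x, y] (sigmaLB x y k) = 10 * k := by
  obtain ⟨k, rfl⟩ : ∃ m, k = m + 1 := ⟨k - 1, (Nat.succ_pred_eq_of_pos hk).symm⟩
  unfold sigmaLB sigmaAlpha
  rw [List.cons_append]
  rw [show tsCost 0 [] [x, y]
      (x :: ((List.replicate (k+1) [y, x, x, x, y, x, x, x]).flatten ++
        (List.replicate (2 * (k+1)) [y, y, x, x]).flatten)) =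
      0 + tsCost 0 [x] [x, y]
        ((List.replicate (k+1) [y, x, x, x, y, x, x, x]).flatten ++
          (List.replicate (2 * (k+1)) [y, y, x, x]).flatten) from by
    simp [tsCost, tsStep]]
  obtain ⟨h', hh', h1⟩ := tsA x y hxy (k+1) ((List.replicate (2 * (k+1)) [y, y, x, x]).flatten)
    [x] (Or.inl rfl)
  rw [zero_add, h1]
  have hh'' : ∃ t, h' = x::x::x::y::t := by
    rcases hh' with ⟨_, hk0⟩ | hh' 
    · exact absurd hk0 (Nat.succ_ne_zero k)
    · exact hh'
  obtain ⟨h'', _, h2⟩ := tsB x y hxy (2 * (k+1)) [] h' (Or.inl hh'')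
  rw [show (List.replicate (2*(k+1)) [y,y,x,x]).flatten =
    (List.replicate (2*(k+1)) [y,y,x,x]).flatten ++ [] from by simp, h2]
  simp [tsCost]; ring

end TS


variable {α : Type} [DecidableEq α]

section OPTsteps
variable (x y : α) (hxy : x ≠ y)
include hxy

lemma sv1 (σ : List α) (as : List (Action α)) :
    serveCost 0 [x,y] (y::σ) (⟨[],1⟩::as) = 1 + serveCost 0 [x,y] σ as := by
  simp [serveCost, stepCost, stepList, doPaid, freeMove, hxy, hxy.symm, List.insertIdx, List.erase_cons]

lemma sv2 (σ : List α) (as : List (Action α)) :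
    serveCost 0 [x,y] (x::σ) (⟨[],0⟩::as) = serveCost 0 [x,y] σ as := by
  simp [serveCost, stepCost, stepList, doPaid, freeMove, hxy, hxy.symm, List.insertIdx, List.erase_cons]

lemma sv3 (σ : List α) (as : List (Action α)) :
    serveCost 0 [x,y] (y::σ) (⟨[],0⟩::as) = 1 + serveCost 0 [y,x] σ as := by
  simp [serveCost, stepCost, stepList, doPaid, freeMove, hxy, hxy.symm, List.insertIdx, List.erase_cons]

lemma sv4 (σ : List α) (as : List (Action α)) :
    serveCost 0 [y,x] (y::σ) (⟨[],0⟩::as) = serveCost 0 [y,x] σ as := by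
  simp [serveCost, stepCost, stepList, doPaid, freeMove, hxy, hxy.symm, List.insertIdx, List.erase_cons]

lemma sv5 (σ : List α) (as : List (Action α)) :
    serveCost 0 [y,x] (x::σ) (⟨[],0⟩::as) = 1 + serveCost 0 [x,y] σ as := by
  simp [serveCost, stepCost, stepList, doPaid, freeMove, hxy, hxy.symm, List.insertIdx, List.erase_cons]

end OPTsteps

def blkA (α : Type) : List (Action α) :=
  [⟨[],1⟩,⟨[],0⟩,⟨[],0⟩,⟨[],0⟩,⟨[],1⟩,⟨[],0⟩,⟨[],0⟩,⟨[],0⟩]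

def blkB (α : Type) : List (Action α) := [⟨[],0⟩,⟨[],0⟩,⟨[],0⟩,⟨[],0⟩]

lemma len_flat_rep {β : Type} (n : ℕ) (l : List β) :
    ((List.replicate n l).flatten).length = n * l.length := by
  induction n with
  | zero => simp
  | succ n ih => simp [List.replicate_succ, ih, Nat.succ_mul]; ring

section OPT
variable (x y : α) (hxy : x ≠ y)
include hxy

lemma optA : ∀ (k : ℕ) (σ : List α) (as : List (Action α)),
    serveCost 0 [x,y] ((List.replicate k [y,x,x,x,y,x,x,x]).flatten ++ σ)
      ((List.replicate k (blkA α)).flatten ++ as) = 2 * k + serveCost 0 [x,y] σ as := by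
  intro k
  induction k with
  | zero => simp
  | succ k ih =>
    intro σ as
    rw [List.replicate_succ, List.flatten_cons, List.append_assoc,
        List.replicate_succ, List.flatten_cons, List.append_assoc]
    show serveCost 0 [x,y] (y::x::x::x::y::x::x::x::_) (⟨[],1⟩::⟨[],0⟩::⟨[],0⟩::⟨[],0⟩::⟨[],1⟩::⟨[],0⟩::⟨[],0⟩::⟨[],0⟩::_) = _
    rw [sv1 x y hxy, sv2 x y hxy, sv2 x y hxy, sv2 x y hxy, sv1 x y hxy,
        sv2 x y hxy, sv2 x y hxy, sv2 x y hxy]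
    simp only [List.nil_append, List.append_eq]
    rw [ih]; ring

lemma optB : ∀ (k : ℕ) (σ : List α) (as : List (Action α)),
    serveCost 0 [x,y] ((List.replicate k [y,y,x,x]).flatten ++ σ)
      ((List.replicate k (blkB α)).flatten ++ as) = 2 * k + serveCost 0 [x,y] σ as := by
  intro k
  induction k with
  | zero => simp
  | succ k ih =>
    intro σ as
    rw [List.replicate_succ, List.flatten_cons, List.append_assoc,
        List.replicate_succ, List.flatten_cons, List.append_assoc]
    show serveCost 0 [x,y] (y::y::x::x::_) (⟨[],0⟩::⟨[],0⟩::⟨[],0⟩::⟨[],0⟩::_) = _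
    rw [sv3 x y hxy, sv4 x y hxy, sv5 x y hxy, sv2 x y hxy]
    simp only [List.nil_append, List.append_eq]
    rw [ih]; ring

lemma opt_le (k : ℕ) : optCost 0 [x,y] (sigmaLB x y k) ≤ 6 * k := by
  apply Nat.sInf_le
  refine ⟨⟨[],0⟩ :: ((List.replicate k (blkA α)).flatten ++ (List.replicate (2*k) (blkB α)).flatten), ?_, ?_⟩
  · simp [sigmaLB, sigmaAlpha, len_flat_rep, blkA, blkB]
  · unfold sigmaLB sigmaAlpha
    rw [List.cons_append]
    rw [show serveCost 0 [x,y]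
        (x :: ((List.replicate k [y,x,x,x,y,x,x,x]).flatten ++ (List.replicate (2*k) [y,y,x,x]).flatten))
        (⟨[],0⟩ :: ((List.replicate k (blkA α)).flatten ++ (List.replicate (2*k) (blkB α)).flatten)) =
        serveCost 0 [x,y]
        ((List.replicate k [y,x,x,x,y,x,x,x]).flatten ++ (List.replicate (2*k) [y,y,x,x]).flatten)
        ((List.replicate k (blkA α)).flatten ++ (List.replicate (2*k) (blkB α)).flatten) from
      sv2 x y hxy _ _]
    rw [optA x y hxy]
    rw [show (List.replicate (2*k) [y,y,x,x]).flatten = (List.replicate (2*k) [y,y,x,x]).flatten ++ ([] : List α) from by simp,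
        show (List.replicate (2*k) (blkB α)).flatten = (List.replicate (2*k) (blkB α)).flatten ++ ([] : List (Action α)) from by simp]
    rw [optB x y hxy]
    simp [serveCost]
    ring

end OPT


/-- On the two-item list `[x, y]`, under the partial cost model, for every `k ≥ 1`,
`MTFO(σ) = MTFE(σ) = TS(σ) = 10k` and `OPT(σ) ≤ 6k`; in particular each of the three
algorithms incurs cost at least `(5/3)·OPT(σ)`. -/
theorem lower_bound_partial_cost {α : Type} [DecidableEq α] (x y : α) (hxy : x ≠ y)
    (k : ℕ) (hk : 0 < k) :
    mtfoCost 0 [x, y] (sigmaLB x y k) = 10 * k ∧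
    mtfeCost 0 [x, y] (sigmaLB x y k) = 10 * k ∧
    tsCost 0 [] [x, y] (sigmaLB x y k) = 10 * k ∧
    optCost 0 [x, y] (sigmaLB x y k) ≤ 6 * k ∧
    5 * optCost 0 [x, y] (sigmaLB x y k) ≤ 3 * mtfoCost 0 [x, y] (sigmaLB x y k) ∧
    5 * optCost 0 [x, y] (sigmaLB x y k) ≤ 3 * mtfeCost 0 [x, y] (sigmaLB x y k) ∧
    5 * optCost 0 [x, y] (sigmaLB x y k) ≤ 3 * tsCost 0 [] [x, y] (sigmaLB x y k) := by
  have hmtfo := mtfo_total x y hxy k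
  have hmtfe := mtfe_total x y hxy k
  have hts := ts_total x y hxy k hk
  have hopt := opt_le x y hxy k
  refine ⟨hmtfo, hmtfe, hts, hopt, ?_, ?_, ?_⟩ <;> omega
end

section
/- Let a list of l items be initially ordered [a_1,…,a_l] and let σ_γ consist of 2s repetitions of the block a_l,a_l,a_l, a_{l−1},a_{l−1},a_{l−1}, …, a_1,a_1,a_1 (three consecutive requests to each item, in reverse list order). Under the full cost model, MTFO(σ_γ) = MTFE(σ_γ) = s·(3l² + 3l), TS(σ_γ) = s·(4l² + 2l), and OPT(σ_γ) ≤ s·(2l² + 4l). -/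
open ListUpdate

/-- The block of `σ_γ`: three consecutive requests to each item, in reverse list order
(items are `0,…,l-1`, initially in the order `0,…,l-1`). -/
def blockGamma (l : ℕ) : List ℕ :=
  (((List.range l).reverse).map (fun i => [i, i, i])).flatten

/-- `σ_γ`: `2s` repetitions of the block. -/
def sigmaGamma (l s : ℕ) : List ℕ := (List.replicate (2 * s) (blockGamma l)).flatten

namespace SigmaGammaAux

open ListUpdate List

/-! ### Generic list helpers -/

lemma takeWhile_append_all {α : Type} (p : α → Bool) :
    ∀ (xs ys : List α), (∀ a ∈ xs, p a = true) →
      List.takeWhile p (xs ++ ys) = xs ++ List.takeWhile p ys := by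
  intro xs
  induction xs with
  | nil => simp
  | cons a t ih =>
      intro ys h
      simp only [List.cons_append, List.takeWhile_cons_of_pos (h a (by simp))]
      rw [ih ys (fun b hb => h b (by simp [hb]))]

lemma dropWhile_append_all {α : Type} (p : α → Bool) :
    ∀ (xs ys : List α), (∀ a ∈ xs, p a = true) →
      List.dropWhile p (xs ++ ys) = List.dropWhile p ys := by
  intro xs
  induction xs with
  | nil => simp
  | cons a t ih =>
      intro ys h
      simp only [List.cons_append, List.dropWhile_cons_of_pos (h a (by simp))]
      exact ih ys (fun b hb => h b (by simp [hb]))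

lemma takeWhile_all {α : Type} (p : α → Bool) :
    ∀ (xs : List α), (∀ a ∈ xs, p a = true) → List.takeWhile p xs = xs := by
  intro xs
  induction xs with
  | nil => simp
  | cons a t ih =>
      intro h
      rw [List.takeWhile_cons_of_pos (h a (by simp)), ih (fun b hb => h b (by simp [hb]))]

lemma takeWhile_none {α : Type} (p : α → Bool) :
    ∀ (xs : List α), (∀ a ∈ xs, p a = false) → List.takeWhile p xs = [] := by
  intro xs
  cases xs with
  | nil => simp
  | cons a t =>
      intro h
      exact List.takeWhile_cons_of_neg (by simp [h a (by simp)])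

/-! ### The state lists -/

/-- The partial block: triples of `k-1, k-2, …, 0`. -/
def P (k : ℕ) : List ℕ := (((List.range k).reverse).map (fun i => [i, i, i])).flatten

/-- Ascending triples of `a, a+1, …, a+n-1`. -/
def F (a n : ℕ) : List ℕ := ((List.range' a n).map (fun i => [i, i, i])).flatten

lemma P_succ (k : ℕ) : P (k + 1) = k :: k :: k :: P k := by
  simp [P, List.range_succ]

lemma P_zero : P 0 = [] := rfl

lemma blockGamma_eq (l : ℕ) : blockGamma l = P l := rfl

lemma F_succ (a n : ℕ) : F a (n + 1) = a :: a :: a :: F (a + 1) n := by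
  simp [F, List.range'_succ]

lemma F_zero (a : ℕ) : F a 0 = [] := rfl

lemma mem_F {z a n : ℕ} : z ∈ F a n ↔ a ≤ z ∧ z < a + n := by
  simp only [F, List.mem_flatten, List.mem_map]
  constructor
  · rintro ⟨_, ⟨i, hi, rfl⟩, hz⟩
    rw [List.mem_range'] at hi
    obtain ⟨j, hj, rfl⟩ := hi
    simp at hz
    omega
  · rintro ⟨h1, h2⟩
    exact ⟨[z, z, z], ⟨z, by rw [List.mem_range']; exact ⟨z - a, by omega⟩, rfl⟩, by simp⟩

lemma count_F (z a n : ℕ) : (F a n).count z = 3 * (List.range' a n).count z := by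
  induction n generalizing a with
  | zero => simp [F_zero]
  | succ n ih =>
      rw [F_succ, List.range'_succ]
      simp only [List.count_cons, ih (a + 1)]
      by_cases h : a = z <;> simp [h] <;> split_ifs with h' <;> (try obtain ⟨i, hi, h''⟩ := h') <;> omega

lemma blockGamma_reverse (l : ℕ) : (blockGamma l).reverse = F 0 l := by
  rw [blockGamma, List.reverse_flatten, F, List.range_eq_range']
  congr 1
  simp [List.map_map, Function.comp]

/-- The list state after the items `k, …, l-1` have been moved to the front. -/
def Ls (l k : ℕ) : List ℕ := List.range' k (l - k) ++ List.range k

lemma Ls_zero (l : ℕ) : Ls l 0 = List.range l := by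
  simp [Ls, List.range_eq_range']

lemma Ls_top (l : ℕ) : Ls l l = List.range l := by
  simp [Ls]

lemma not_mem_range'_of_lt {k a n : ℕ} (h : k < a) : k ∉ List.range' a n := by
  rw [List.mem_range']
  rintro ⟨i, hi, rfl⟩
  omega

lemma indexOf_Ls (l k : ℕ) (hk : k < l) : (Ls l (k + 1)).idxOf k = l - 1 := by
  rw [Ls, List.idxOf_append_of_notMem (not_mem_range'_of_lt (by omega)),
    List.range_succ, List.idxOf_append_of_notMem (by simp), List.length_range',
    List.length_range, List.idxOf_cons_self]
  omega

lemma erase_Ls (l k : ℕ) : (Ls l (k + 1)).erase k = List.range' (k + 1) (l - (k + 1)) ++ List.range k := by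
  rw [Ls, List.erase_append_right _ (not_mem_range'_of_lt (by omega)),
    List.range_succ, List.erase_append_right _ (by simp), List.erase_cons_head]
  simp

lemma cons_Ls (l k : ℕ) (hk : k < l) :
    k :: (List.range' (k + 1) (l - (k + 1)) ++ List.range k) = Ls l k := by
  rw [Ls]
  have : l - k = (l - (k + 1)) + 1 := by omega
  rw [this, List.range'_succ]
  rfl

end SigmaGammaAux
namespace SigmaGammaAux

open ListUpdate List

/-! ### MTF2 -/

def mtf2Bits {α : Type} [DecidableEq α] : (α → Bool) → List α → (α → Bool)
  | bits, [] => bits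
  | bits, r :: σ => mtf2Bits (Function.update bits r (!bits r)) σ

lemma mtf2Cost_append {α : Type} [DecidableEq α] (c : ℕ) (σ₁ : List α) :
    ∀ (bits : α → Bool) (L : List α) (σ₂ : List α),
      mtf2Cost c bits L (σ₁ ++ σ₂) =
        mtf2Cost c bits L σ₁ + mtf2Cost c (mtf2Bits bits σ₁) (mtf2List bits L σ₁) σ₂ := by
  induction σ₁ with
  | nil => intro bits L σ₂; simp [mtf2Cost, mtf2List, mtf2Bits]
  | cons r σ ih =>
      intro bits L σ₂
      simp [mtf2Cost, mtf2List, mtf2Bits, List.append_eq, ih, Nat.add_assoc]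

lemma mtf2List_append {α : Type} [DecidableEq α] (σ₁ : List α) :
    ∀ (bits : α → Bool) (L : List α) (σ₂ : List α),
      mtf2List bits L (σ₁ ++ σ₂) =
        mtf2List (mtf2Bits bits σ₁) (mtf2List bits L σ₁) σ₂ := by
  induction σ₁ with
  | nil => intro bits L σ₂; simp [mtf2List, mtf2Bits]
  | cons r σ ih =>
      intro bits L σ₂
      simp [mtf2List, mtf2Bits, List.append_eq, ih]

lemma mtf2Bits_append {α : Type} [DecidableEq α] (σ₁ : List α) :
    ∀ (bits : α → Bool) (σ₂ : List α),
      mtf2Bits bits (σ₁ ++ σ₂) = mtf2Bits (mtf2Bits bits σ₁) σ₂ := by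
  induction σ₁ with
  | nil => intro bits σ₂; simp [mtf2Bits]
  | cons r σ ih => intro bits σ₂; simp [mtf2Bits, List.append_eq, ih]

lemma mtf2_triple_true {α : Type} [DecidableEq α] (c : ℕ) (bits : α → Bool) (L : List α)
    (x : α) (hb : bits x = true) :
    mtf2Cost c bits L [x, x, x] = (L.idxOf x + c) + c + c ∧
      mtf2List bits L [x, x, x] = x :: L.erase x ∧
      mtf2Bits bits [x, x, x] = Function.update bits x false := by
  refine ⟨?_, ?_, ?_⟩ <;>
    · simp [mtf2Cost, mtf2List, mtf2Bits, hb, Function.update_self, Function.update_idem,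
        List.idxOf_cons_self, List.erase_cons_head]
      try omega

lemma mtf2_triple_false {α : Type} [DecidableEq α] (c : ℕ) (bits : α → Bool) (L : List α)
    (x : α) (hb : bits x = false) :
    mtf2Cost c bits L [x, x, x] = (L.idxOf x + c) + (L.idxOf x + c) + c ∧
      mtf2List bits L [x, x, x] = x :: L.erase x ∧
      mtf2Bits bits [x, x, x] = Function.update bits x true := by
  refine ⟨?_, ?_, ?_⟩ <;>
    · simp [mtf2Cost, mtf2List, mtf2Bits, hb, Function.update_self, Function.update_idem,
        List.idxOf_cons_self, List.erase_cons_head]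
      try omega

lemma mtf2_block (l : ℕ) (b : Bool) :
    ∀ k, k ≤ l → ∀ bits : ℕ → Bool, (∀ j, j < k → bits j = b) →
      mtf2Cost 1 bits (Ls l k) (P k) = k * (cond b (l + 2) (2 * l + 1)) ∧
      mtf2List bits (Ls l k) (P k) = List.range l ∧
      (∀ j, j < k → mtf2Bits bits (P k) j = !b) ∧
      (∀ j, k ≤ j → mtf2Bits bits (P k) j = bits j) := by
  intro k
  induction k with
  | zero =>
      intro _ bits _
      simp [P_zero, mtf2Cost, mtf2List, mtf2Bits, Ls_zero]
  | succ k ih =>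
      intro hk bits hbits
      have hkl : k < l := by omega
      have hbk : bits k = b := hbits k (by omega)
      have hb3 : mtf2Bits bits [k, k, k] = Function.update bits k (!b) := by
        cases b with
        | false => simpa using (mtf2_triple_false 1 bits (Ls l (k + 1)) k hbk).2.2
        | true => simpa using (mtf2_triple_true 1 bits (Ls l (k + 1)) k hbk).2.2
      have hc : mtf2Cost 1 bits (Ls l (k + 1)) [k, k, k] = cond b (l + 2) (2 * l + 1) := by
        cases b with
        | false =>
            rw [(mtf2_triple_false 1 bits (Ls l (k + 1)) k hbk).1, indexOf_Ls l k hkl]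
            simp only [cond]; omega
        | true =>
            rw [(mtf2_triple_true 1 bits (Ls l (k + 1)) k hbk).1, indexOf_Ls l k hkl]
            simp only [cond]; omega
      have hlist : mtf2List bits (Ls l (k + 1)) [k, k, k] = Ls l k := by
        cases b with
        | false =>
            rw [(mtf2_triple_false 1 bits (Ls l (k + 1)) k hbk).2.1, erase_Ls, cons_Ls l k hkl]
        | true =>
            rw [(mtf2_triple_true 1 bits (Ls l (k + 1)) k hbk).2.1, erase_Ls, cons_Ls l k hkl]
      have hbits'lt : ∀ j, j < k → mtf2Bits bits [k, k, k] j = b := by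
        intro j hj
        rw [hb3, Function.update_of_ne (by omega)]
        exact hbits j (by omega)
      obtain ⟨ihc, ihl, ihb1, ihb2⟩ := ih (by omega) (mtf2Bits bits [k, k, k]) hbits'lt
      have hsplit : P (k + 1) = [k, k, k] ++ P k := by rw [P_succ]; rfl
      refine ⟨?_, ?_, ?_, ?_⟩
      · rw [hsplit, mtf2Cost_append, hc, hlist, ihc]
        cases b <;> simp only [cond] <;> ring
      · rw [hsplit, mtf2List_append, hlist, ihl]
      · intro j hj
        rw [hsplit, mtf2Bits_append]
        rcases Nat.lt_or_ge j k with h | h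
        · exact ihb1 j h
        · have hjk : j = k := by omega
          subst hjk
          rw [ihb2 j le_rfl, hb3, Function.update_self]
      · intro j hj
        rw [hsplit, mtf2Bits_append, ihb2 j (by omega), hb3,
          Function.update_of_ne (by omega)]

lemma mtf2_sigma (l : ℕ) :
    ∀ (s : ℕ) (bits : ℕ → Bool) (b : Bool), (∀ j, j < l → bits j = b) →
      mtf2Cost 1 bits (List.range l) (sigmaGamma l s) = s * (3 * l ^ 2 + 3 * l) := by
  intro s
  induction s with
  | zero => intro bits b _; simp [sigmaGamma, mtf2Cost]
  | succ s ih =>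
      intro bits b hb
      have h2 : 2 * (s + 1) = (2 * s) + 1 + 1 := by ring
      have hσ : sigmaGamma l (s + 1) = P l ++ (P l ++ sigmaGamma l s) := by
        rw [sigmaGamma, h2, List.replicate_succ, List.replicate_succ, List.flatten_cons,
          List.flatten_cons]
        rfl
      have hLs : Ls l l = List.range l := Ls_top l
      obtain ⟨c1, l1, b1, -⟩ := mtf2_block l b l le_rfl bits hb
      rw [hLs] at c1 l1
      obtain ⟨c2, l2, b2, -⟩ := mtf2_block l (!b) l le_rfl (mtf2Bits bits (P l)) b1
      rw [hLs] at c2 l2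
      have ihh := ih (mtf2Bits (mtf2Bits bits (P l)) (P l)) b
        (fun j hj => by rw [b2 j hj, Bool.not_not])
      rw [hσ, mtf2Cost_append, c1, l1, mtf2Cost_append, c2, l2, ihh]
      cases b <;> simp only [cond, Bool.not_true, Bool.not_false] <;> ring

end SigmaGammaAux
namespace SigmaGammaAux

open ListUpdate List

/-! ### TS -/

def tsList {α : Type} [DecidableEq α] : List α → List α → List α → List α
  | _, L, [] => L
  | h, L, r :: σ => tsList (r :: h) (tsStep h L r) σ

lemma tsCost_append {α : Type} [DecidableEq α] (c : ℕ) (σ₁ : List α) :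
    ∀ (h L σ₂ : List α),
      tsCost c h L (σ₁ ++ σ₂) =
        tsCost c h L σ₁ + tsCost c (σ₁.reverse ++ h) (tsList h L σ₁) σ₂ := by
  induction σ₁ with
  | nil => intro h L σ₂; simp [tsCost, tsList]
  | cons r σ ih =>
      intro h L σ₂
      simp [tsCost, tsList, List.append_eq, ih, Nat.add_assoc]

lemma tsList_append {α : Type} [DecidableEq α] (σ₁ : List α) :
    ∀ (h L σ₂ : List α),
      tsList h L (σ₁ ++ σ₂) = tsList (σ₁.reverse ++ h) (tsList h L σ₁) σ₂ := by
  induction σ₁ with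
  | nil => intro h L σ₂; simp [tsList]
  | cons r σ ih =>
      intro h L σ₂
      simp [tsList, List.append_eq, ih]

lemma tsStep_not_mem {α : Type} [DecidableEq α] (h L : List α) (x : α) (hx : x ∉ h) :
    tsStep h L x = L := by
  simp [tsStep, hx]

lemma erase_eq_tw_dw {α : Type} [DecidableEq α] (x : α) :
    ∀ L : List α, x ∈ L →
      L.takeWhile (fun w => decide (w ≠ x)) ++ (L.dropWhile (fun w => decide (w ≠ x))).tail
        = L.erase x := by
  intro L
  induction L with
  | nil => simp
  | cons a t ih =>
      intro hx
      by_cases hax : a = x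
      · subst hax
        rw [List.takeWhile_cons_of_neg (by simp), List.dropWhile_cons_of_neg (by simp),
          List.erase_cons_head]
        simp
      · have hxt : x ∈ t := by rcases (List.mem_cons.mp hx) with h' | h'; exact absurd h'.symm hax; exact h'
        rw [List.takeWhile_cons_of_pos (by simp [hax]),
          List.dropWhile_cons_of_pos (by simp [hax]), List.erase_cons_tail]
        · simp only [List.cons_append, ih hxt]
        · simp [hax]

lemma tsStep_second {α : Type} [DecidableEq α] (h : List α) (L : List α) (x : α)
    (hx : x ∈ L) : tsStep (x :: h) L x = x :: L.erase x := by
  rw [tsStep, if_pos (by simp)]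
  have h1 : (x :: h).takeWhile (fun w => decide (w ≠ x)) = [] := by
    rw [List.takeWhile_cons_of_neg]; simp
  simp only [h1]
  have h2 : ∀ M : List α, M.takeWhile (fun z => decide (2 ≤ List.count z ([] : List α))) = [] := by
    intro M
    apply takeWhile_none
    intro a _
    simp
  simp only [h2]
  simp only [List.nil_append, List.length_nil, List.drop_zero]
  rw [erase_eq_tw_dw x L hx]

lemma tsStep_head {α : Type} [DecidableEq α] (h : List α) (M : List α) (x : α) :
    tsStep h (x :: M) x = x :: M := by
  rw [tsStep]
  split
  · have h1 : (x :: M).takeWhile (fun w => decide (w ≠ x)) = [] := by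
      rw [List.takeWhile_cons_of_neg]; simp
    have h2 : (x :: M).dropWhile (fun w => decide (w ≠ x)) = x :: M := by
      rw [List.dropWhile_cons_of_neg]; simp
    simp [h1, h2]
  · rfl

lemma ts_triple {α : Type} [DecidableEq α] (c : ℕ) (h L : List α) (x : α)
    (hx : x ∈ L) (h1 : tsStep h L x = L) :
    tsCost c h L [x, x, x] = (L.idxOf x + c) + ((L.idxOf x + c) + (c + 0)) ∧
      tsList h L [x, x, x] = x :: L.erase x := by
  have h2 := tsStep_second h L x hx
  constructor
  · simp only [tsCost, h1, h2, tsStep_head, List.idxOf_cons_self]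
    omega
  · simp only [tsList, h1, h2, tsStep_head]
lemma range'_split (a m n : ℕ) :
    List.range' a (m + n) = List.range' a m ++ List.range' (a + m) n := by
  have h := List.range'_append (s := a) (m := m) (n := n) (step := 1)
  simp only [one_mul] at h
  rw [← h]

lemma F_append (a m n : ℕ) : F a (m + n) = F a m ++ F (a + m) n := by
  rw [F, F, F, ← List.flatten_append, ← List.map_append, ← range'_split]

lemma tsStep_seen (l j : ℕ) (hj : j < l) (rest : List ℕ) :
    tsStep (F (j + 1) (l - (j + 1)) ++ (F 0 l ++ rest)) (Ls l (j + 1)) j = Ls l (j + 1) := by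
  set m := l - (j + 1) with hm
  have hF0l : F 0 l = F 0 j ++ (j :: j :: j :: F (j + 1) m) := by
    have : l = j + (m + 1) := by omega
    rw [this, F_append, Nat.zero_add, F_succ]
  have hh : F (j + 1) m ++ (F 0 l ++ rest) =
      (F (j + 1) m ++ F 0 j) ++ (j :: (j :: j :: (F (j + 1) m ++ rest))) := by
    rw [hF0l]; simp
  have hA : ∀ a ∈ F (j + 1) m ++ F 0 j, (fun w => decide (w ≠ j)) a = true := by
    intro a ha
    rcases List.mem_append.mp ha with h | h <;> rw [mem_F] at h <;> simp <;> omega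
  have hQ : ∀ a ∈ List.range' (j + 1) m ++ List.range j,
      (fun w => decide (w ≠ j)) a = true := by
    intro a ha
    rcases List.mem_append.mp ha with h | h
    · rw [List.mem_range'] at h; obtain ⟨i, hi, rfl⟩ := h; simp; omega
    · rw [List.mem_range] at h; simp; omega
  have hLdecomp : Ls l (j + 1) =
      (List.range' (j + 1) m ++ List.range j) ++ [j] := by
    rw [Ls, List.range_succ, ← hm, List.append_assoc]
  have hmem : j ∈ F (j + 1) m ++ (F 0 l ++ rest) := by
    rw [hh]; exact List.mem_append_right _ (by simp)
  rw [tsStep, if_pos hmem]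
  have hTW : (F (j + 1) m ++ (F 0 l ++ rest)).takeWhile (fun w => decide (w ≠ j)) =
      F (j + 1) m ++ F 0 j := by
    rw [hh, takeWhile_append_all _ _ _ hA, List.takeWhile_cons_of_neg (by simp),
      List.append_nil]
  have hpre : (Ls l (j + 1)).takeWhile (fun w => decide (w ≠ j)) =
      List.range' (j + 1) m ++ List.range j := by
    rw [hLdecomp, takeWhile_append_all _ _ _ hQ, List.takeWhile_cons_of_neg (by simp),
      List.append_nil]
  have hcnt : ∀ z ∈ List.range' (j + 1) m ++ List.range j,
      (fun z => decide (2 ≤ (F (j + 1) m ++ F 0 j).count z)) z = true := by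
    intro z hz
    have : 2 ≤ (F (j + 1) m ++ F 0 j).count z := by
      rw [List.count_append, count_F, count_F]
      rcases List.mem_append.mp hz with h | h
      · have := List.count_eq_one_of_mem (List.nodup_range') h
        omega
      · rw [List.mem_range] at h
        have hz' : z ∈ List.range' 0 j := by
          rw [List.mem_range']; exact ⟨z, h, by omega⟩
        have := List.count_eq_one_of_mem (List.nodup_range') hz'
        omega
    simpa using this
  have hkeep : (List.range' (j + 1) m ++ List.range j).takeWhile
      (fun z => decide (2 ≤ (F (j + 1) m ++ F 0 j).count z)) =
      List.range' (j + 1) m ++ List.range j := takeWhile_all _ _ hcnt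
  have hDW : (Ls l (j + 1)).dropWhile (fun w => decide (w ≠ j)) = [j] := by
    rw [hLdecomp, dropWhile_append_all _ _ _ hQ, List.dropWhile_cons_of_neg (by simp)]
  simp only [hTW, hpre, hkeep, hDW, List.drop_length, List.tail_cons, List.append_nil]
  rw [← hLdecomp]

lemma ts_block (l : ℕ) (h0 : List ℕ)
    (hyp : ∀ j, j < l →
      tsStep (F (j + 1) (l - (j + 1)) ++ h0) (Ls l (j + 1)) j = Ls l (j + 1)) :
    ∀ k, k ≤ l →
      tsCost 1 (F k (l - k) ++ h0) (Ls l k) (P k) = k * (2 * l + 1) ∧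
      tsList (F k (l - k) ++ h0) (Ls l k) (P k) = List.range l := by
  intro k
  induction k with
  | zero => intro _; simp [P_zero, tsCost, tsList, Ls_zero]
  | succ k ih =>
      intro hk
      have hkl : k < l := by omega
      have hx : k ∈ Ls l (k + 1) := by
        rw [Ls]
        exact List.mem_append_right _ (List.mem_range.mpr (by omega))
      obtain ⟨tc, tl⟩ := ts_triple 1 (F (k + 1) (l - (k + 1)) ++ h0) (Ls l (k + 1)) k hx
        (hyp k hkl)
      have hlist : k :: (Ls l (k + 1)).erase k = Ls l k := by
        rw [erase_Ls, cons_Ls l k hkl]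
      have hhist : [k, k, k].reverse ++ (F (k + 1) (l - (k + 1)) ++ h0) = F k (l - k) ++ h0 := by
        have h1 : l - k = (l - (k + 1)) + 1 := by omega
        rw [h1, F_succ]
        simp
      have hsplit : P (k + 1) = [k, k, k] ++ P k := by rw [P_succ]; rfl
      obtain ⟨ihc, ihl⟩ := ih (by omega)
      constructor
      · have harith : (k + 1) * (2 * l + 1) = k * (2 * l + 1) + (2 * l + 1) := by ring
        rw [hsplit, tsCost_append, tc, indexOf_Ls l k hkl, tl, hlist, hhist, ihc, harith]
        omega
      · rw [hsplit, tsList_append, tl, hlist, hhist, ihl]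

def GoodH (l : ℕ) (h0 : List ℕ) : Prop := h0 = [] ∨ ∃ rest, h0 = F 0 l ++ rest

lemma hyp_of_good (l : ℕ) (h0 : List ℕ) (hg : GoodH l h0) :
    ∀ j, j < l →
      tsStep (F (j + 1) (l - (j + 1)) ++ h0) (Ls l (j + 1)) j = Ls l (j + 1) := by
  intro j hj
  rcases hg with rfl | ⟨rest, rfl⟩
  · apply tsStep_not_mem
    simp only [List.append_nil, mem_F]
    omega
  · exact tsStep_seen l j hj rest

lemma P_reverse (l : ℕ) : (P l).reverse = F 0 l := blockGamma_reverse l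

lemma ts_chain (l : ℕ) :
    ∀ (m : ℕ) (h0 : List ℕ), GoodH l h0 →
      tsCost 1 h0 (List.range l) ((List.replicate m (P l)).flatten) = m * (l * (2 * l + 1)) := by
  intro m
  induction m with
  | zero => intro h0 _; simp [tsCost]
  | succ m ih =>
      intro h0 hg
      obtain ⟨bc, bl⟩ := ts_block l h0 (hyp_of_good l h0 hg) l le_rfl
      rw [Nat.sub_self, F_zero, List.nil_append, Ls_top] at bc bl
      rw [List.replicate_succ, List.flatten_cons, tsCost_append, bc, bl, P_reverse,
        ih (F 0 l ++ h0) (Or.inr ⟨h0, rfl⟩)]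
      ring

lemma ts_sigma (l s : ℕ) :
    tsCost 1 [] (List.range l) (sigmaGamma l s) = s * (4 * l ^ 2 + 2 * l) := by
  have h : sigmaGamma l s = (List.replicate (2 * s) (P l)).flatten := rfl
  rw [h, ts_chain l (2 * s) [] (Or.inl rfl)]
  ring
/-! ### OPT via plain move-to-front -/

def mtfCost {α : Type} [DecidableEq α] (c : ℕ) : List α → List α → ℕ
  | _, [] => 0
  | L, r :: σ => (L.idxOf r + c) + mtfCost c (r :: L.erase r) σ

def mtfList {α : Type} [DecidableEq α] : List α → List α → List α
  | L, [] => L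
  | L, r :: σ => mtfList (r :: L.erase r) σ

lemma serve_replicate {α : Type} [DecidableEq α] (c : ℕ) :
    ∀ (σ : List α) (L : List α),
      serveCost c L σ (List.replicate σ.length ⟨[], 0⟩) = mtfCost c L σ := by
  intro σ
  induction σ with
  | nil => intro L; simp [serveCost, mtfCost]
  | cons r σ ih =>
      intro L
      have hstep : stepList L r (⟨[], 0⟩ : Action α) = r :: L.erase r := by
        simp [stepList, doPaid, freeMove, Nat.zero_min, List.insertIdx_zero]
      have hcost : stepCost c L r (⟨[], 0⟩ : Action α) = L.idxOf r + c := by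
        simp [stepCost, doPaid]
      rw [List.length_cons, List.replicate_succ]
      show stepCost c L r _ + serveCost c (stepList L r _) σ _ = _
      rw [hstep, hcost, ih (r :: L.erase r)]
      rfl

lemma mtfCost_append {α : Type} [DecidableEq α] (c : ℕ) (σ₁ : List α) :
    ∀ (L σ₂ : List α),
      mtfCost c L (σ₁ ++ σ₂) = mtfCost c L σ₁ + mtfCost c (mtfList L σ₁) σ₂ := by
  induction σ₁ with
  | nil => intro L σ₂; simp [mtfCost, mtfList]
  | cons r σ ih => intro L σ₂; simp [mtfCost, mtfList, List.append_eq, ih, Nat.add_assoc]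

lemma mtfList_append {α : Type} [DecidableEq α] (σ₁ : List α) :
    ∀ (L σ₂ : List α), mtfList L (σ₁ ++ σ₂) = mtfList (mtfList L σ₁) σ₂ := by
  induction σ₁ with
  | nil => intro L σ₂; simp [mtfList]
  | cons r σ ih => intro L σ₂; simp [mtfList, List.append_eq, ih]

lemma mtf_triple {α : Type} [DecidableEq α] (c : ℕ) (L : List α) (x : α) :
    mtfCost c L [x, x, x] = (L.idxOf x + c) + c + c ∧
      mtfList L [x, x, x] = x :: L.erase x := by
  constructor
  · simp [mtfCost, List.idxOf_cons_self, List.erase_cons_head]; omega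
  · simp [mtfList, List.erase_cons_head]

lemma mtf_block (l : ℕ) :
    ∀ k, k ≤ l →
      mtfCost 1 (Ls l k) (P k) = k * (l + 2) ∧ mtfList (Ls l k) (P k) = List.range l := by
  intro k
  induction k with
  | zero => intro _; simp [P_zero, mtfCost, mtfList, Ls_zero]
  | succ k ih =>
      intro hk
      have hkl : k < l := by omega
      obtain ⟨tc, tl⟩ := mtf_triple 1 (Ls l (k + 1)) k
      have hlist : mtfList (Ls l (k + 1)) [k, k, k] = Ls l k := by
        rw [tl, erase_Ls, cons_Ls l k hkl]
      obtain ⟨ihc, ihl⟩ := ih (by omega)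
      have hsplit : P (k + 1) = [k, k, k] ++ P k := by rw [P_succ]; rfl
      constructor
      · have harith : (k + 1) * (l + 2) = k * (l + 2) + (l + 2) := by ring
        rw [hsplit, mtfCost_append, tc, indexOf_Ls l k hkl, hlist, ihc, harith]
        omega
      · rw [hsplit, mtfList_append, hlist, ihl]

lemma mtf_chain (l : ℕ) :
    ∀ m, mtfCost 1 (List.range l) ((List.replicate m (P l)).flatten) = m * (l * (l + 2)) := by
  intro m
  induction m with
  | zero => simp [mtfCost]
  | succ m ih =>
      obtain ⟨bc, bl⟩ := mtf_block l l le_rfl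
      rw [Ls_top] at bc bl
      rw [List.replicate_succ, List.flatten_cons, mtfCost_append, bc, bl, ih]
      ring

lemma opt_bound (l s : ℕ) :
    optCost 1 (List.range l) (sigmaGamma l s) ≤ s * (2 * l ^ 2 + 4 * l) := by
  have hm : mtfCost 1 (List.range l) (sigmaGamma l s) = s * (2 * l ^ 2 + 4 * l) := by
    have h : sigmaGamma l s = (List.replicate (2 * s) (P l)).flatten := rfl
    rw [h, mtf_chain l (2 * s)]
    ring
  apply Nat.sInf_le
  exact ⟨List.replicate (sigmaGamma l s).length ⟨[], 0⟩, List.length_replicate,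
    by rw [serve_replicate, hm]⟩

end SigmaGammaAux

/-- Under the full cost model, `MTFO(σ_γ) = MTFE(σ_γ) = s·(3l² + 3l)`,
`TS(σ_γ) = s·(4l² + 2l)`, and `OPT(σ_γ) ≤ s·(2l² + 4l)`. -/
theorem costs_on_sigma_gamma (l s : ℕ) :
    mtfoCost 1 (List.range l) (sigmaGamma l s) = s * (3 * l ^ 2 + 3 * l) ∧
    mtfeCost 1 (List.range l) (sigmaGamma l s) = s * (3 * l ^ 2 + 3 * l) ∧
    tsCost 1 [] (List.range l) (sigmaGamma l s) = s * (4 * l ^ 2 + 2 * l) ∧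
    optCost 1 (List.range l) (sigmaGamma l s) ≤ s * (2 * l ^ 2 + 4 * l) := by
  refine ⟨?_, ?_, ?_, ?_⟩
  · exact SigmaGammaAux.mtf2_sigma l s (fun _ => true) true (fun _ _ => rfl)
  · exact SigmaGammaAux.mtf2_sigma l s (fun _ => false) false (fun _ _ => rfl)
  · exact SigmaGammaAux.ts_sigma l s
  · exact SigmaGammaAux.opt_bound l s
end

section
/- For every ε > 0 and every M, there exist a list with an initial order and a request sequence σ such that, under the full cost model, OPT(σ) ≥ M and min(MTFO(σ), MTFE(σ), TS(σ)) ≥ (1.6 − ε)·OPT(σ). Consequently, the algorithm that serves each input by the cheapest of MTFO, MTFE and TS has competitive ratio at least 1.6 under the full cost model. -/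
namespace ListUpdate

section LowerBoundConstruction

set_option maxRecDepth 1000000

variable {α : Type} [DecidableEq α]

/-! ### MTF2 auxiliary machinery -/

def mtf2Bits : (α → Bool) → List α → (α → Bool)
  | bits, [] => bits
  | bits, r :: σ => mtf2Bits (Function.update bits r (!bits r)) σ

lemma mtf2Cost_append (c : ℕ) (bits : α → Bool) (L σ1 σ2 : List α) :
    mtf2Cost c bits L (σ1 ++ σ2)
      = mtf2Cost c bits L σ1 + mtf2Cost c (mtf2Bits bits σ1) (mtf2List bits L σ1) σ2 := by
  induction σ1 generalizing bits L with
  | nil => simp [mtf2Cost, mtf2List, mtf2Bits]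
  | cons r σ ih => simp [mtf2Cost, mtf2List, mtf2Bits, ih, Nat.add_assoc]

lemma mtf2List_append (bits : α → Bool) (L σ1 σ2 : List α) :
    mtf2List bits L (σ1 ++ σ2) = mtf2List (mtf2Bits bits σ1) (mtf2List bits L σ1) σ2 := by
  induction σ1 generalizing bits L with
  | nil => simp [mtf2List, mtf2Bits]
  | cons r σ ih => simp [mtf2List, mtf2Bits, ih]

lemma mtf2Bits_apply (bits : α → Bool) (σ : List α) (x : α) :
    mtf2Bits bits σ x = if Even (σ.count x) then bits x else !bits x := by
  induction σ generalizing bits with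
  | nil => simp [mtf2Bits]
  | cons r σ ih =>
    rw [mtf2Bits, ih]
    by_cases hx : x = r
    · subst hx
      rw [List.count_cons_self]
      by_cases he : Even (σ.count x)
      · simp [he, Nat.even_add_one, Function.update_self]
      · simp [he, Nat.even_add_one, Function.update_self]
    · have hcnt : (r :: σ).count x = σ.count x := by
        simp [List.count_cons, hx, Ne.symm hx]
      rw [hcnt, Function.update_of_ne hx]

/-! ### TS auxiliary machinery -/

def tsList : List α → List α → List α → List α
  | _, L, [] => L
  | h, L, r :: σ => tsList (r :: h) (tsStep h L r) σ

lemma tsCost_append (c : ℕ) (h L σ1 σ2 : List α) :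
    tsCost c h L (σ1 ++ σ2)
      = tsCost c h L σ1 + tsCost c (σ1.reverse ++ h) (tsList h L σ1) σ2 := by
  induction σ1 generalizing h L with
  | nil => simp [tsCost, tsList]
  | cons r σ ih =>
    simp [tsCost, tsList, ih, Nat.add_assoc, List.append_assoc]

lemma tsList_append (h L σ1 σ2 : List α) :
    tsList h L (σ1 ++ σ2) = tsList (σ1.reverse ++ h) (tsList h L σ1) σ2 := by
  induction σ1 generalizing h L with
  | nil => simp [tsList]
  | cons r σ ih =>
    simp [tsList, ih, List.append_assoc]

lemma takeWhile_append_of_mem {q : α → Bool} {x : α} {h1 : List α} (hx : x ∈ h1)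
    (hq : q x = false) (h2 : List α) :
    (h1 ++ h2).takeWhile q = h1.takeWhile q := by
  induction h1 with
  | nil => cases hx
  | cons a t ih =>
    rcases List.mem_cons.mp hx with rfl | hxt
    · simp [List.takeWhile_cons, hq]
    · by_cases ha : q a
      · simp [List.takeWhile_cons, ha, ih hxt]
      · simp [List.takeWhile_cons, ha]

lemma tsStep_hist_append {x : α} {h1 : List α} (hx : x ∈ h1) (L h2 : List α) :
    tsStep (h1 ++ h2) L x = tsStep h1 L x := by
  have hmem : x ∈ h1 ++ h2 := List.mem_append_left _ hx
  have ht : (h1 ++ h2).takeWhile (fun w => decide (w ≠ x))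
      = h1.takeWhile (fun w => decide (w ≠ x)) :=
    takeWhile_append_of_mem hx (by simp) h2
  unfold tsStep
  rw [if_pos hmem, if_pos hx, ht]

def covered : List α → List α → Bool
  | _, [] => true
  | h, r :: σ => (decide (r ∈ h) && covered (r :: h) σ)

lemma ts_hist_drop (c : ℕ) :
    ∀ (σ h1 L h2 : List α), covered h1 σ = true →
      tsCost c (h1 ++ h2) L σ = tsCost c h1 L σ ∧
        tsList (h1 ++ h2) L σ = tsList h1 L σ := by
  intro σ
  induction σ with
  | nil => intro h1 L h2 _; exact ⟨rfl, rfl⟩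
  | cons r σ ih =>
    intro h1 L h2 hcov
    rw [covered] at hcov
    simp only [Bool.and_eq_true, decide_eq_true_eq] at hcov
    obtain ⟨hr, hcov⟩ := hcov
    have hstep := tsStep_hist_append hr L h2
    have hcons : r :: (h1 ++ h2) = (r :: h1) ++ h2 := rfl
    have hih := ih (r :: h1) (tsStep h1 L r) h2 hcov
    constructor
    · show (L.idxOf r + c) + tsCost c (r :: (h1 ++ h2)) (tsStep (h1 ++ h2) L r) σ
        = (L.idxOf r + c) + tsCost c (r :: h1) (tsStep h1 L r) σ
      rw [hstep, hcons, hih.1]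
    · show tsList (r :: (h1 ++ h2)) (tsStep (h1 ++ h2) L r) σ
        = tsList (r :: h1) (tsStep h1 L r) σ
      rw [hstep, hcons, hih.2]

/-! ### serve machinery -/

lemma serve_append (c : ℕ) :
    ∀ (σ1 : List α) (as1 : List (Action α)) (σ2 : List α) (as2 : List (Action α)) (L : List α),
      as1.length = σ1.length →
      serveCost c L (σ1 ++ σ2) (as1 ++ as2)
          = serveCost c L σ1 as1 + serveCost c (serveList L σ1 as1) σ2 as2
        ∧ serveList L (σ1 ++ σ2) (as1 ++ as2) = serveList (serveList L σ1 as1) σ2 as2 := by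
  intro σ1
  induction σ1 with
  | nil =>
    intro as1 σ2 as2 L h
    have : as1 = [] := List.length_eq_zero_iff.mp h
    subst this
    simp [serveCost, serveList]
  | cons r σ ih =>
    intro as1 σ2 as2 L h
    cases as1 with
    | nil => simp at h
    | cons a as =>
      have h' : as.length = σ.length := by simpa using h
      have hih := ih as σ2 as2 (stepList L r a) h'
      have e1 : serveList L (r :: σ) (a :: as) = serveList (stepList L r a) σ as := rfl
      have e2 : serveCost c L (r :: σ) (a :: as)
          = stepCost c L r a + serveCost c (stepList L r a) σ as := rfl
      have e3 : serveCost c L ((r :: σ) ++ σ2) ((a :: as) ++ as2)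
          = stepCost c L r a + serveCost c (stepList L r a) (σ ++ σ2) (as ++ as2) := rfl
      have e4 : serveList L ((r :: σ) ++ σ2) ((a :: as) ++ as2)
          = serveList (stepList L r a) (σ ++ σ2) (as ++ as2) := rfl
      rw [e1, e2, e3, e4, hih.1, hih.2]
      exact ⟨by omega, rfl⟩

lemma serveCost_ge :
    ∀ (σ : List α) (as : List (Action α)) (L : List α), as.length = σ.length →
      σ.length ≤ serveCost 1 L σ as := by
  intro σ
  induction σ with
  | nil => intro as L _; simp
  | cons r σ ih =>
    intro as L h
    cases as with
    | nil => simp at h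
    | cons a as =>
      have h' : as.length = σ.length := by simpa using h
      have hih := ih as (stepList L r a) h'
      have hstep : 1 ≤ stepCost 1 L r a := by
        unfold stepCost; omega
      show σ.length + 1 ≤ stepCost 1 L r a + serveCost 1 (stepList L r a) σ as
      omega

lemma optCost_le_serve (L σ : List α) (as : List (Action α)) (h : as.length = σ.length) :
    optCost 1 L σ ≤ serveCost 1 L σ as :=
  Nat.sInf_le ⟨as, h, rfl⟩

lemma optCost_ge_len (L σ : List α) : σ.length ≤ optCost 1 L σ := by
  have hne : {n | ∃ as : List (Action α), as.length = σ.length ∧ serveCost 1 L σ as = n}.Nonempty :=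
    ⟨serveCost 1 L σ (List.replicate σ.length ⟨[], 0⟩),
      ⟨List.replicate σ.length ⟨[], 0⟩, List.length_replicate, rfl⟩⟩
  obtain ⟨as, hlen, hval⟩ := Nat.sInf_mem hne
  calc σ.length ≤ serveCost 1 L σ as := serveCost_ge σ as L hlen
    _ = optCost 1 L σ := hval

/-! ### the concrete construction: 25 items -/

def L25 : List ℕ := List.range 25
def ascL : List ℕ := List.range 25
def asc2L : List ℕ := ascL.flatMap (fun i => [i, i])
def descL : List ℕ := ascL.reverse
def desc2L : List ℕ := descL.flatMap (fun i => [i, i])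
def blk : List ℕ := ascL ++ ascL ++ ascL ++ asc2L ++ descL ++ desc2L
def pref50 : List ℕ := blk.reverse.take 50
def reps : ℕ → List ℕ
  | 0 => []
  | n + 1 => blk ++ reps n
def acts1 : List (Action ℕ) :=
  List.replicate 75 ⟨[], 25⟩ ++ List.replicate 50 ⟨[], 0⟩ ++
    List.replicate 25 ⟨[], 25⟩ ++ List.replicate 50 ⟨[], 0⟩
def actsN : ℕ → List (Action ℕ)
  | 0 => []
  | n + 1 => acts1 ++ actsN n

lemma count_flatMap_pair (x : ℕ) (t : List ℕ) :
    (t.flatMap (fun i => [i, i])).count x = 2 * t.count x := by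
  induction t with
  | nil => simp
  | cons a t ih =>
    have hfm : ((a :: t).flatMap (fun i => [i, i])) = a :: a :: t.flatMap (fun i => [i, i]) := rfl
    rw [hfm]
    by_cases hxa : x = a
    · subst hxa
      rw [List.count_cons_self, List.count_cons_self, List.count_cons_self, ih]
      ring
    · rw [List.count_cons_of_ne (Ne.symm hxa), List.count_cons_of_ne (Ne.symm hxa), List.count_cons_of_ne (Ne.symm hxa), ih]

lemma blk_count_even (x : ℕ) : Even (blk.count x) := by
  have h2 := count_flatMap_pair x ascL
  have h3 := count_flatMap_pair x descL
  have h4 : descL.count x = ascL.count x := by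
    simp [descL]
  rw [Nat.even_iff]
  simp only [blk, asc2L, desc2L, List.count_append]
  omega

lemma mtf2Bits_blk (bits : ℕ → Bool) : mtf2Bits bits blk = bits := by
  funext x
  rw [mtf2Bits_apply, if_pos (blk_count_even x)]

lemma blkO_cost : mtf2Cost 1 (fun _ => true) L25 blk = 3200 := by decide +kernel
lemma blkO_list : mtf2List (fun _ => true) L25 blk = L25 := by decide +kernel
lemma blkE_cost : mtf2Cost 1 (fun _ => false) L25 blk = 3200 := by decide +kernel
lemma blkE_list : mtf2List (fun _ => false) L25 blk = L25 := by decide +kernel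
lemma blkT_cost : tsCost 1 [] L25 blk = 3200 := by decide +kernel
lemma blkT_list : tsList [] L25 blk = L25 := by decide +kernel
lemma blkTs_cost : tsCost 1 pref50 L25 blk = 3200 := by decide +kernel
lemma blkTs_list : tsList pref50 L25 blk = L25 := by decide +kernel
lemma blk_covered : covered pref50 blk = true := by decide
lemma serve_cost_blk : serveCost 1 L25 blk acts1 = 2000 := by decide +kernel
lemma serve_list_blk : serveList L25 blk acts1 = L25 := by decide +kernel
lemma acts1_len : acts1.length = blk.length := by decide
lemma blk_len : blk.length = 200 := by decide
lemma blk_mem : ∀ r ∈ blk, r ∈ L25 := by decide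
lemma L25_nodup : L25.Nodup := List.nodup_range

lemma mtf2_reps (bits : ℕ → Bool) (hC : mtf2Cost 1 bits L25 blk = 3200)
    (hL : mtf2List bits L25 blk = L25) (hB : mtf2Bits bits blk = bits) :
    ∀ n, mtf2Cost 1 bits L25 (reps n) = 3200 * n := by
  intro n
  induction n with
  | zero => simp [reps, mtf2Cost]
  | succ n ih =>
    rw [reps, mtf2Cost_append, hB, hL, hC, ih]
    ring

lemma pref50_append : pref50 ++ blk.reverse.drop 50 = blk.reverse :=
  List.take_append_drop _ _

lemma ts_steady : ∀ (n : ℕ) (h2 : List ℕ),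
    tsCost 1 (pref50 ++ h2) L25 (reps n) = 3200 * n ∧
      tsList (pref50 ++ h2) L25 (reps n) = L25 := by
  intro n
  induction n with
  | zero =>
    intro h2
    exact ⟨by simp [reps, tsCost], by simp [reps, tsList]⟩
  | succ n ih =>
    intro h2
    have hd := ts_hist_drop 1 blk pref50 L25 h2 blk_covered
    have hh : blk.reverse ++ (pref50 ++ h2)
        = pref50 ++ (blk.reverse.drop 50 ++ (pref50 ++ h2)) := by
      conv_lhs => rw [← pref50_append]
      rw [List.append_assoc]
    constructor
    · rw [reps, tsCost_append, hd.1, hd.2, blkTs_cost, blkTs_list, hh, (ih _).1]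
      ring
    · rw [reps, tsList_append, hd.2, blkTs_list, hh, (ih _).2]

lemma ts_reps (n : ℕ) : tsCost 1 [] L25 (reps n) = 3200 * n := by
  cases n with
  | zero => simp [reps, tsCost]
  | succ n =>
    rw [reps, tsCost_append, blkT_cost, blkT_list, List.append_nil,
      ← pref50_append, (ts_steady n _).1]
    ring

lemma actsN_len : ∀ n, (actsN n).length = (reps n).length := by
  intro n
  induction n with
  | zero => rfl
  | succ n ih => simp [actsN, reps, acts1_len, ih]

lemma serve_reps : ∀ n, serveCost 1 L25 (reps n) (actsN n) = 2000 * n ∧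
    serveList L25 (reps n) (actsN n) = L25 := by
  intro n
  induction n with
  | zero => exact ⟨rfl, rfl⟩
  | succ n ih =>
    have h := serve_append 1 blk acts1 (reps n) (actsN n) L25 acts1_len
    constructor
    · rw [reps, actsN, h.1, serve_cost_blk, serve_list_blk, ih.1]
      ring
    · rw [reps, actsN, h.2, serve_list_blk, ih.2]

lemma reps_len (n : ℕ) : (reps n).length = 200 * n := by
  induction n with
  | zero => rfl
  | succ n ih => simp [reps, blk_len, ih]; ring

lemma reps_mem (n : ℕ) : ∀ r ∈ reps n, r ∈ L25 := by
  induction n with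
  | zero => intro r hr; cases hr
  | succ n ih =>
    intro r hr
    rcases List.mem_append.mp hr with h | h
    · exact blk_mem r h
    · exact ih r h

lemma opt_reps_le (n : ℕ) : optCost 1 L25 (reps n) ≤ 2000 * n := by
  have h := optCost_le_serve L25 (reps n) (actsN n) (actsN_len n)
  rw [(serve_reps n).1] at h
  exact h

lemma opt_reps_ge (n : ℕ) : 200 * n ≤ optCost 1 L25 (reps n) := by
  have h := optCost_ge_len L25 (reps n)
  rwa [reps_len] at h

lemma mtfo_reps (n : ℕ) : mtfoCost 1 L25 (reps n) = 3200 * n :=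
  mtf2_reps _ blkO_cost blkO_list (mtf2Bits_blk _) n

lemma mtfe_reps (n : ℕ) : mtfeCost 1 L25 (reps n) = 3200 * n :=
  mtf2_reps _ blkE_cost blkE_list (mtf2Bits_blk _) n

end LowerBoundConstruction

end ListUpdate

open ListUpdate

/-- For every `ε > 0` and every `M` there are an initial list and a request sequence
`σ` with `OPT(σ) ≥ M` and `min(MTFO(σ), MTFE(σ), TS(σ)) ≥ (1.6 − ε)·OPT(σ)` (full cost
model); consequently, the algorithm serving each input by the cheapest of MTFO, MTFE
and TS has competitive ratio at least `1.6`. -/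
theorem best_of_three_lower_bound :
    (∀ ε : ℝ, 0 < ε → ∀ M : ℕ, ∃ (L σ : List ℕ), L.Nodup ∧ (∀ r ∈ σ, r ∈ L) ∧
      M ≤ optCost 1 L σ ∧
      (1.6 - ε) * (optCost 1 L σ : ℝ) ≤
        (min (mtfoCost 1 L σ) (min (mtfeCost 1 L σ) (tsCost 1 [] L σ)) : ℝ)) ∧
    (∀ c : ℝ, c < 1.6 → ∀ b : ℝ, ∃ (L σ : List ℕ), L.Nodup ∧ (∀ r ∈ σ, r ∈ L) ∧
      ¬((min (mtfoCost 1 L σ) (min (mtfeCost 1 L σ) (tsCost 1 [] L σ)) : ℝ) ≤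
          c * (optCost 1 L σ : ℝ) + b)) := by
  constructor
  · intro ε hε M
    refine ⟨L25, reps M, L25_nodup, reps_mem M, ?_, ?_⟩
    · have h := opt_reps_ge M
      omega
    · rw [mtfo_reps, mtfe_reps, ts_reps, min_self, min_self]
      have hO0 : (0 : ℝ) ≤ (optCost 1 L25 (reps M) : ℝ) := Nat.cast_nonneg _
      have hOle : (optCost 1 L25 (reps M) : ℝ) ≤ 2000 * M := by
        exact_mod_cast opt_reps_le M
      have hcast : ((3200 * M : ℕ) : ℝ) = 3200 * (M : ℝ) := by push_cast; ring
      rw [hcast]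
      nlinarith [mul_nonneg hε.le hO0]
  · intro c hc b
    obtain ⟨n, hn⟩ := exists_nat_gt (b / ((1.6 - c) * 200))
    refine ⟨L25, reps n, L25_nodup, reps_mem n, ?_⟩
    rw [mtfo_reps, mtfe_reps, ts_reps, min_self, min_self]
    have hδ : (0 : ℝ) < (1.6 - c) * 200 := by nlinarith
    have hb : b < (1.6 - c) * 200 * n := by
      rw [div_lt_iff₀ hδ] at hn
      linarith
    have hOlow : (200 * n : ℝ) ≤ (optCost 1 L25 (reps n) : ℝ) := by
      exact_mod_cast opt_reps_ge n
    have hOup : (optCost 1 L25 (reps n) : ℝ) ≤ 2000 * n := by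
      exact_mod_cast opt_reps_le n
    have hcast : ((3200 * n : ℕ) : ℝ) = 3200 * (n : ℝ) := by push_cast; ring
    rw [hcast]
    intro hle
    nlinarith [mul_le_mul_of_nonneg_left hOlow (by nlinarith : (0:ℝ) ≤ 1.6 - c)]
end
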